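/- arXiv:1210.4795 — 8 statements merged into one kernel-verified Lean document; each statement's English description precedes it below -/
import Mathlib

section
/- Let S be an n_t×n_t Hermitian positive semidefinite complex matrix and let C be an invertible n_t×n_t complex matrix such that Cᴴ(S^{1/2}GᴴG S^{1/2} + I)C = I and Cᴴ(S^{1/2}HᴴH S^{1/2} + I)C = Λ, where Λ = diag(λ_1,…,λ_{n_t}) with λ_1 ≥ … ≥ λ_b > 1 ≥ λ_{b+1} ≥ … ≥ λ_{n_t} > 0. Partition C = [C_1 C_2], where C_1 consists of the first b columns of C. Then the matrix Q_S* = S^{1/2} C · blockdiag((C_1ᴴC_1)^{-1}, 0) · Cᴴ S^{1/2} satisfies 0 ⪯ Q_S* ⪯ S and R(Q_S*) = Σ_{i=1}^{b} log λ_i; moreover, for every Hermitian Q with 0 ⪯ Q ⪯ S one has R(Q) ≤ Σ_{i=1}^{b} log λ_i. In other words, the secrecy capacity of the MIMO Gaussian wiretap channel under the matrix power constraint Q ⪯ S equals Σ_{i=1}^{b} log λ_i and is attained by Q_S*. -/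
open Matrix
open scoped ComplexOrder

/-- The positive semidefinite square root of a positive semidefinite matrix
(the definition of `Matrix.PosSemidef.sqrt` in the older Mathlib, since removed). -/
noncomputable def Matrix.PosSemidef.sqrt {n 𝕜 : Type*} [Fintype n] [RCLike 𝕜] [DecidableEq n]
    {A : Matrix n n 𝕜} (hA : A.PosSemidef) : Matrix n n 𝕜 :=
  hA.1.eigenvectorUnitary.1 * diagonal ((↑) ∘ (√·) ∘ hA.1.eigenvalues) *
  (star hA.1.eigenvectorUnitary : Matrix n n 𝕜)

theorem Matrix.PosSemidef.posSemidef_sqrt {n 𝕜 : Type*} [Fintype n] [RCLike 𝕜] [DecidableEq n]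
    {A : Matrix n n 𝕜} (hA : A.PosSemidef) : hA.sqrt.PosSemidef := by
  unfold Matrix.PosSemidef.sqrt
  have hd : (diagonal ((↑) ∘ (√·) ∘ hA.1.eigenvalues : n → 𝕜)).PosSemidef :=
    Matrix.posSemidef_diagonal_iff.mpr (fun i => by simp [Real.sqrt_nonneg])
  have := hd.mul_mul_conjTranspose_same (hA.1.eigenvectorUnitary : Matrix n n 𝕜)
  rwa [← Matrix.star_eq_conjTranspose] at this

theorem Matrix.PosSemidef.sqrt_mul_self {n 𝕜 : Type*} [Fintype n] [RCLike 𝕜] [DecidableEq n]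
    {A : Matrix n n 𝕜} (hA : A.PosSemidef) : hA.sqrt * hA.sqrt = A := by
  unfold Matrix.PosSemidef.sqrt
  conv_rhs => rw [hA.1.spectral_theorem, Unitary.conjStarAlgAut_apply]
  have hu : (star hA.1.eigenvectorUnitary : Matrix n n 𝕜) * (hA.1.eigenvectorUnitary : Matrix n n 𝕜)
      = 1 := Unitary.coe_star_mul_self _
  simp only [Matrix.mul_assoc]
  rw [← Matrix.mul_assoc _ (hA.1.eigenvectorUnitary : Matrix n n 𝕜), hu, Matrix.one_mul, ← Matrix.mul_assoc (diagonal _),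
    diagonal_mul_diagonal]
  congr 2
  congr 1
  funext i
  simp only [Function.comp_apply]
  rw [← RCLike.ofReal_mul, Real.mul_self_sqrt (hA.eigenvalues_nonneg i)]

/-- The secrecy rate `R(Q) = log det(I + H Q Hᴴ) − log det(I + G Q Gᴴ)`
(both determinants are positive reals for `Q` PSD; we take real parts). -/
noncomputable def secrecyRate {nr ne nt : ℕ}
    (H : Matrix (Fin nr) (Fin nt) ℂ) (G : Matrix (Fin ne) (Fin nt) ℂ)
    (Q : Matrix (Fin nt) (Fin nt) ℂ) : ℝ :=
  Real.log ((1 + H * Q * Hᴴ).det.re) - Real.log ((1 + G * Q * Gᴴ).det.re)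

section Helpers
variable {nt : ℕ}

noncomputable def Evec {m : ℕ} (v : Fin m → ℂ) : ℝ := ∑ i, ‖v i‖^2

lemma Evec_nonneg {m : ℕ} (v : Fin m → ℂ) : 0 ≤ Evec v :=
  Finset.sum_nonneg fun _ _ => sq_nonneg _

lemma dot_star_self {m : ℕ} (v : Fin m → ℂ) : star v ⬝ᵥ v = ((Evec v : ℝ) : ℂ) := by
  simp only [dotProduct, Evec, Pi.star_apply, Complex.star_def, Complex.ofReal_sum]
  congr 1
  funext i
  rw [mul_comm, Complex.mul_conj]
  norm_cast
  rw [Complex.normSq_eq_norm_sq]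

lemma dot_star_self_nonneg {m : ℕ} (v : Fin m → ℂ) : 0 ≤ star v ⬝ᵥ v := by
  rw [dot_star_self]
  exact Complex.zero_le_real.mpr (Evec_nonneg v)

lemma dot_conjTranspose_mul {a b : ℕ} (M : Matrix (Fin a) (Fin b) ℂ) (y : Fin b → ℂ) :
    star y ⬝ᵥ ((Mᴴ * M) *ᵥ y) = star (M *ᵥ y) ⬝ᵥ (M *ᵥ y) := by
  rw [← mulVec_mulVec, dotProduct_mulVec, star_mulVec]

lemma dot_conj3 {a b : ℕ} (M : Matrix (Fin a) (Fin b) ℂ) (A : Matrix (Fin a) (Fin a) ℂ)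
    (x : Fin b → ℂ) :
    star x ⬝ᵥ ((Mᴴ * A * M) *ᵥ x) = star (M *ᵥ x) ⬝ᵥ (A *ᵥ (M *ᵥ x)) := by
  rw [← mulVec_mulVec, ← mulVec_mulVec, dotProduct_mulVec, ← star_mulVec]

lemma cauchy_schwarz_dot {m : ℕ} (u w : Fin m → ℂ) :
    ‖star u ⬝ᵥ w‖ ≤ Real.sqrt (Evec u) * Real.sqrt (Evec w) := by
  let u' : EuclideanSpace ℂ (Fin m) := (WithLp.equiv 2 _).symm u
  let w' : EuclideanSpace ℂ (Fin m) := (WithLp.equiv 2 _).symm w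
  have h := norm_inner_le_norm (𝕜 := ℂ) u' w'
  rw [EuclideanSpace.inner_eq_star_dotProduct] at h
  have hnu : ‖u'‖ = Real.sqrt (Evec u) := by rw [EuclideanSpace.norm_eq]; rfl
  have hnw : ‖w'‖ = Real.sqrt (Evec w) := by rw [EuclideanSpace.norm_eq]; rfl
  rw [hnu, hnw] at h
  rw [dotProduct_comm] at h
  exact h

lemma psd_swap {a b : ℕ} (D : Matrix (Fin a) (Fin b) ℂ)
    (h : (1 - D * Dᴴ).PosSemidef) : (1 - Dᴴ * D).PosSemidef := by
  have key : ∀ y : Fin a → ℂ, Evec (Dᴴ *ᵥ y) ≤ Evec y := by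
    intro y
    have h2 := h.dotProduct_mulVec_nonneg y
    rw [sub_mulVec, dotProduct_sub, sub_nonneg, one_mulVec] at h2
    have h3 : star y ⬝ᵥ ((D * Dᴴ) *ᵥ y) = ((Evec (Dᴴ *ᵥ y) : ℝ) : ℂ) := by
      have := dot_conjTranspose_mul Dᴴ y
      rw [conjTranspose_conjTranspose] at this
      rw [this, dot_star_self]
    rw [h3, dot_star_self y] at h2
    exact_mod_cast h2
  refine Matrix.PosSemidef.of_dotProduct_mulVec_nonneg ?_ ?_
  · have : (1 - Dᴴ * D)ᴴ = 1 - Dᴴ * D := by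
      simp [conjTranspose_sub, conjTranspose_mul]
    exact this
  intro x
  rw [sub_mulVec, dotProduct_sub, sub_nonneg, one_mulVec, dot_conjTranspose_mul,
    dot_star_self, dot_star_self]
  have goal : Evec (D *ᵥ x) ≤ Evec x := by
    set y := D *ᵥ x with hy
    set z := Dᴴ *ᵥ y with hz
    have h1 : star y ⬝ᵥ y = star x ⬝ᵥ z := by
      rw [hz, hy, mulVec_mulVec, dot_conjTranspose_mul]
    have h2 : Evec y = ‖star x ⬝ᵥ z‖ := by
      rw [← h1, dot_star_self]
      rw [Complex.norm_real, Real.norm_eq_abs, abs_of_nonneg (Evec_nonneg y)]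
    have h3 : ‖star x ⬝ᵥ z‖ ≤ Real.sqrt (Evec x) * Real.sqrt (Evec z) := cauchy_schwarz_dot x z
    have h5 : Real.sqrt (Evec z) ≤ Real.sqrt (Evec y) := Real.sqrt_le_sqrt (key y)
    have h6 : Evec y ≤ Real.sqrt (Evec x) * Real.sqrt (Evec y) := by
      calc Evec y ≤ Real.sqrt (Evec x) * Real.sqrt (Evec z) := h2 ▸ h3
      _ ≤ Real.sqrt (Evec x) * Real.sqrt (Evec y) :=
        mul_le_mul_of_nonneg_left h5 (Real.sqrt_nonneg _)
    have sx := Real.sq_sqrt (Evec_nonneg x)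
    have sy := Real.sq_sqrt (Evec_nonneg y)
    nlinarith [Real.sqrt_nonneg (Evec x), Real.sqrt_nonneg (Evec y),
      sq_nonneg (Real.sqrt (Evec x) - Real.sqrt (Evec y))]
  exact_mod_cast goal

lemma det_re_pos {M : Matrix (Fin nt) (Fin nt) ℂ} (hM : M.PosDef) : 0 < M.det.re := by
  have := hM.det_pos
  rw [Complex.lt_def] at this
  simpa using this.1

lemma det_eq_re {M : Matrix (Fin nt) (Fin nt) ℂ} (hM : M.PosDef) : M.det = (M.det.re : ℂ) := by
  have := hM.det_pos
  rw [Complex.lt_def] at this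
  exact (Complex.ext rfl (by simpa using this.2.symm))

lemma one_le_det_one_add {X : Matrix (Fin nt) (Fin nt) ℂ} (hX : X.PosSemidef) :
    (1 : ℝ) ≤ (1 + X).det.re := by
  classical
  have hs := hX.1.spectral_theorem
  set U : Matrix (Fin nt) (Fin nt) ℂ := (hX.1.eigenvectorUnitary : Matrix (Fin nt) (Fin nt) ℂ)
    with hUdef
  have hU : U * star U = 1 := Matrix.mem_unitaryGroup_iff.mp hX.1.eigenvectorUnitary.2
  set D : Matrix (Fin nt) (Fin nt) ℂ := diagonal (RCLike.ofReal ∘ hX.1.eigenvalues) with hDdef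
  have h1 : (1 + X) = U * (1 + D) * star U := by
    rw [mul_add, add_mul, mul_one, hU]
    exact congrArg (1 + ·) hs
  have hdet : (1 + X).det = (1 + D).det := by
    rw [h1, det_mul_comm, ← mul_assoc]
    have hU' : star U * U = 1 := Matrix.mem_unitaryGroup_iff'.mp hX.1.eigenvectorUnitary.2
    rw [hU', one_mul]
  have h2 : (1 + D : Matrix (Fin nt) (Fin nt) ℂ)
      = diagonal (fun i => ((1 + hX.1.eigenvalues i : ℝ) : ℂ)) := by
    rw [hDdef, ← diagonal_one, diagonal_add]
    congr 1
    funext i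
    simp
  rw [hdet, h2, det_diagonal, ← Complex.ofReal_prod, Complex.ofReal_re]
  have hnn : ∀ i ∈ Finset.univ, (1:ℝ) ≤ 1 + hX.1.eigenvalues i :=
    fun i _ => by linarith [hX.eigenvalues_nonneg i]
  calc (1:ℝ) = ∏ _i : Fin nt, 1 := by simp
  _ ≤ ∏ i : Fin nt, (1 + hX.1.eigenvalues i) := Finset.prod_le_prod (by simp) hnn

lemma det_one_add_eq_re {X : Matrix (Fin nt) (Fin nt) ℂ} (hX : X.PosSemidef) :
    (1 + X).det = (((1 + X).det.re : ℝ) : ℂ) :=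
  det_eq_re (Matrix.PosDef.add_posSemidef Matrix.PosDef.one hX)

lemma det_re_le_of_psd_le {M N : Matrix (Fin nt) (Fin nt) ℂ} (hM : M.PosDef)
    (hMN : (N - M).PosSemidef) : M.det.re ≤ N.det.re := by
  classical
  set K := hM.posSemidef.sqrt with hKdef
  have hK : K.PosSemidef := hM.posSemidef.posSemidef_sqrt
  have hKK : K * K = M := hM.posSemidef.sqrt_mul_self
  have hdetM : K.det * K.det = M.det := by rw [← det_mul, hKK]
  have hdK : IsUnit K.det := by
    have : M.det ≠ 0 := hM.det_pos.ne'
    rw [← hdetM] at this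
    exact (IsUnit.mul_iff.mp (Ne.isUnit this)).1
  have hKinv : K * K⁻¹ = 1 := mul_nonsing_inv K hdK
  have hKinv' : K⁻¹ * K = 1 := nonsing_inv_mul K hdK
  have hKinvH : (K⁻¹)ᴴ = K⁻¹ := by rw [conjTranspose_nonsing_inv, hK.1.eq]
  set X := K⁻¹ * (N - M) * K⁻¹ with hXdef
  have hX : X.PosSemidef := by
    have := hMN.mul_mul_conjTranspose_same (K⁻¹)
    rwa [hKinvH] at this
  have hN : N = K * (1 + X) * K := by
    rw [hXdef, mul_add, mul_one, add_mul, hKK, ← mul_assoc, ← mul_assoc, mul_assoc (K * K⁻¹),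
      hKinv, one_mul, mul_assoc, hKinv', mul_one]
    abel
  have hdetN : N.det = M.det * (1 + X).det := by
    rw [hN, det_mul, det_mul, ← hdetM]; ring
  have h1 : (1:ℝ) ≤ (1 + X).det.re := one_le_det_one_add hX
  have himM : M.det.im = 0 := by rw [det_eq_re hM]; simp
  have himX : (1 + X).det.im = 0 := by rw [det_one_add_eq_re hX]; simp
  have : N.det.re = M.det.re * (1 + X).det.re := by
    rw [hdetN, Complex.mul_re, himM, himX]; ring
  rw [this]
  nlinarith [det_re_pos hM]

lemma douglas {S T Q : Matrix (Fin nt) (Fin nt) ℂ} (hT : T.PosSemidef)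
    (hTT : T * T = S) (hQ : Q.PosSemidef) (hSQ : (S - Q).PosSemidef) :
    ∃ W : Matrix (Fin nt) (Fin nt) ℂ,
      W.PosSemidef ∧ ((1 : Matrix (Fin nt) (Fin nt) ℂ) - W).PosSemidef ∧ T * W * T = Q := by
  classical
  set U : Matrix (Fin nt) (Fin nt) ℂ := (hT.1.eigenvectorUnitary : Matrix (Fin nt) (Fin nt) ℂ)
    with hUdef
  have hU : U * star U = 1 := Matrix.mem_unitaryGroup_iff.mp hT.1.eigenvectorUnitary.2
  have hU' : star U * U = 1 := Matrix.mem_unitaryGroup_iff'.mp hT.1.eigenvectorUnitary.2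
  set μ := hT.1.eigenvalues with hμdef
  have hst := hT.1.spectral_theorem
  have cdm : ∀ d e : Fin nt → ℂ, (U * diagonal d * star U) * (U * diagonal e * star U)
      = U * diagonal (fun i => d i * e i) * star U := by
    intro d e
    calc (U * diagonal d * star U) * (U * diagonal e * star U)
        = U * diagonal d * (star U * U) * diagonal e * star U := by
          simp only [mul_assoc]
      _ = U * diagonal (fun i => d i * e i) * star U := by
          rw [hU']
          simp only [mul_one, mul_assoc, diagonal_mul_diagonal]
  have cdH : ∀ d : Fin nt → ℂ, (U * diagonal d * star U)ᴴ = U * diagonal (star d) * star U := by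
    intro d
    simp only [conjTranspose_mul, diagonal_conjTranspose, star_eq_conjTranspose,
      conjTranspose_conjTranspose, mul_assoc]
  set dT : Fin nt → ℂ := fun i => ((μ i : ℝ) : ℂ) with hdT
  have hTeq : T = U * diagonal dT * star U := hst
  set dP : Fin nt → ℂ := fun i => if μ i = 0 then 0 else ((μ i : ℝ) : ℂ)⁻¹ with hdP
  set dPi : Fin nt → ℂ := fun i => if μ i = 0 then 0 else 1 with hdPi
  set Tp : Matrix (Fin nt) (Fin nt) ℂ := U * diagonal dP * star U with hTp
  set Pi' : Matrix (Fin nt) (Fin nt) ℂ := U * diagonal dPi * star U with hPidef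
  have hfun1 : (fun i => dT i * dP i) = dPi := by
    funext i
    simp only [hdT, hdP, hdPi]
    by_cases h : μ i = 0
    · simp [h]
    · rw [if_neg h, if_neg h, mul_inv_cancel₀ (Complex.ofReal_ne_zero.mpr h)]
  have hfun2 : (fun i => dP i * dT i) = dPi := by
    funext i
    simp only [hdT, hdP, hdPi]
    by_cases h : μ i = 0
    · simp [h]
    · rw [if_neg h, if_neg h, inv_mul_cancel₀ (Complex.ofReal_ne_zero.mpr h)]
  have hfun3 : (fun i => dT i * dPi i) = dT := by
    funext i
    simp only [hdT, hdP, hdPi]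
    by_cases h : μ i = 0 <;> simp [h]
  have hfun4 : (fun i => dPi i * dPi i) = dPi := by
    funext i
    simp only [hdPi]
    by_cases h : μ i = 0 <;> simp [h]
  have hfun5 : star dPi = dPi := by
    funext i
    simp only [hdPi, Pi.star_apply]
    by_cases h : μ i = 0 <;> simp [h]
  have hfun6 : star dP = dP := by
    funext i
    simp only [hdP, Pi.star_apply]
    by_cases h : μ i = 0 <;> simp [h, ← Complex.ofReal_inv]
  have hTTp : T * Tp = Pi' := by rw [hTeq, hTp, cdm, hfun1]
  have hTpT : Tp * T = Pi' := by rw [hTeq, hTp, cdm, hfun2]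
  have hTPi : T * Pi' = T := by rw [hTeq, hPidef, cdm, hfun3, ← hTeq]
  have hPiH : Pi'ᴴ = Pi' := by rw [hPidef, cdH, hfun5]
  have hPi2 : Pi' * Pi' = Pi' := by rw [hPidef, cdm, hfun4]
  have hTpH : Tpᴴ = Tp := by rw [hTp, cdH, hfun6]
  have hker : Q * (1 - Pi') = 0 := by
    have hmv : ∀ x, (Q * (1 - Pi')) *ᵥ x = 0 := by
      intro x
      set y := (1 - Pi') *ᵥ x with hy
      have hTy : T *ᵥ y = 0 := by
        rw [hy, mulVec_mulVec]
        have : T * (1 - Pi') = 0 := by rw [mul_sub, mul_one, hTPi, sub_self]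
        rw [this, zero_mulVec]
      have hSy : star y ⬝ᵥ (S *ᵥ y) = 0 := by
        have hS' : S = Tᴴ * T := by rw [hT.1.eq, hTT]
        rw [hS', dot_conjTranspose_mul, hTy]
        simp
      have h1 : star y ⬝ᵥ (Q *ᵥ y) ≤ 0 := by
        have h2 := hSQ.dotProduct_mulVec_nonneg y
        rw [sub_mulVec, dotProduct_sub, sub_nonneg, hSy] at h2
        exact h2
      have h0 : star y ⬝ᵥ (Q *ᵥ y) = 0 := le_antisymm h1 (hQ.dotProduct_mulVec_nonneg y)
      have := (hQ.dotProduct_mulVec_zero_iff y).mp h0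
      rw [← mulVec_mulVec]
      exact this
    ext i j
    have := congrFun (hmv (Pi.single j 1)) i
    simpa using this
  have hQPi : Q * Pi' = Q := by
    rw [mul_sub, mul_one] at hker
    have := sub_eq_zero.mp hker
    exact this.symm
  have hPiQ : Pi' * Q = Q := by
    have := congrArg conjTranspose hQPi
    rwa [conjTranspose_mul, hPiH, hQ.1.eq] at this
  refine ⟨Tp * Q * Tp, ?_, ?_, ?_⟩
  · have := hQ.mul_mul_conjTranspose_same Tp
    rwa [hTpH] at this
  · refine Matrix.PosSemidef.of_dotProduct_mulVec_nonneg ?_ ?_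
    · have hW : (Tp * Q * Tp)ᴴ = Tp * Q * Tp := by
        simp only [conjTranspose_mul, hTpH, hQ.1.eq, mul_assoc]
      exact Matrix.isHermitian_one.sub hW
    intro x
    rw [sub_mulVec, dotProduct_sub, sub_nonneg, one_mulVec]
    set u := Tp *ᵥ x with hu
    have e1 : star x ⬝ᵥ ((Tp * Q * Tp) *ᵥ x) = star u ⬝ᵥ (Q *ᵥ u) := by
      have := dot_conj3 Tp Q x
      rwa [hTpH] at this
    have e2 : star u ⬝ᵥ (Q *ᵥ u) ≤ star u ⬝ᵥ (S *ᵥ u) := by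
      have h2 := hSQ.dotProduct_mulVec_nonneg u
      rw [sub_mulVec, dotProduct_sub, sub_nonneg] at h2
      exact h2
    have e3 : star u ⬝ᵥ (S *ᵥ u) = star x ⬝ᵥ (Pi' *ᵥ x) := by
      have hS' : S = Tᴴ * T := by rw [hT.1.eq, hTT]
      rw [hS', dot_conjTranspose_mul, hu, mulVec_mulVec, hTTp]
      rw [← dot_conjTranspose_mul Pi' x, hPiH, hPi2]
    have e4 : star x ⬝ᵥ (Pi' *ᵥ x) ≤ star x ⬝ᵥ x := by
      rw [← sub_nonneg]
      have hexp : star x ⬝ᵥ x - star x ⬝ᵥ (Pi' *ᵥ x) = star x ⬝ᵥ ((1 - Pi') *ᵥ x) := by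
        rw [sub_mulVec, dotProduct_sub, one_mulVec]
      rw [hexp]
      have h1mP : ((1 - Pi')ᴴ * (1 - Pi')) = 1 - Pi' := by
        rw [conjTranspose_sub, conjTranspose_one, hPiH, mul_sub, mul_one, sub_mul, one_mul,
          hPi2, sub_self, sub_zero]
      calc (0:ℂ) ≤ star ((1 - Pi') *ᵥ x) ⬝ᵥ ((1 - Pi') *ᵥ x) := dot_star_self_nonneg _
        _ = star x ⬝ᵥ ((1 - Pi') *ᵥ x) := by
            rw [← dot_conjTranspose_mul (1 - Pi') x, h1mP]
    calc star x ⬝ᵥ ((Tp * Q * Tp) *ᵥ x) = star u ⬝ᵥ (Q *ᵥ u) := e1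
      _ ≤ star u ⬝ᵥ (S *ᵥ u) := e2
      _ = star x ⬝ᵥ (Pi' *ᵥ x) := e3
      _ ≤ star x ⬝ᵥ x := e4
  · calc T * (Tp * Q * Tp) * T = (T * Tp) * Q * (Tp * T) := by simp only [mul_assoc]
      _ = Pi' * Q * Pi' := by rw [hTTp, hTpT]
      _ = Q := by rw [hPiQ, hQPi]

end Helpers



section Helpers2
variable {nt b : ℕ} (hb : b ≤ nt)

lemma filter_lt_eq_map :
    (Finset.univ.filter (fun i : Fin nt => (i : ℕ) < b))
      = Finset.univ.map (Fin.castLEEmb hb) := by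
  ext i
  simp only [Finset.mem_filter, Finset.mem_univ, true_and, Finset.mem_map, Fin.castLEEmb_apply]
  constructor
  · intro h
    exact ⟨⟨i, h⟩, Fin.ext rfl⟩
  · rintro ⟨j, -, rfl⟩
    simpa using j.2

lemma sum_ite_castLE (f : Fin nt → ℝ) :
    (∑ i : Fin nt, if (i : ℕ) < b then f i else 0)
      = ∑ j : Fin b, f (Fin.castLE hb j) := by
  rw [← Finset.sum_filter, filter_lt_eq_map hb, Finset.sum_map]
  rfl

lemma prod_ite_castLE (f : Fin nt → ℝ) :
    (∏ i : Fin nt, if (i : ℕ) < b then f i else 1)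
      = ∏ j : Fin b, f (Fin.castLE hb j) := by
  rw [← Finset.prod_filter, filter_lt_eq_map hb, Finset.prod_map]
  rfl

/-- inclusion matrix -/
noncomputable def incl (hb : b ≤ nt) : Matrix (Fin nt) (Fin b) ℂ :=
  (1 : Matrix (Fin nt) (Fin nt) ℂ).submatrix id (Fin.castLE hb)

lemma mul_incl (M : Matrix (Fin nt) (Fin nt) ℂ) :
    M * incl hb = M.submatrix id (Fin.castLE hb) := by
  ext i j
  simp [incl, Matrix.mul_apply, Matrix.one_apply]

lemma inclH_mul (M : Matrix (Fin nt) (Fin nt) ℂ) :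
    (incl hb)ᴴ * M = M.submatrix (Fin.castLE hb) id := by
  ext i j
  simp [incl, Matrix.mul_apply, Matrix.one_apply, conjTranspose_apply]

lemma inclH_mul_incl (M : Matrix (Fin nt) (Fin nt) ℂ) :
    (incl hb)ᴴ * M * incl hb = M.submatrix (Fin.castLE hb) (Fin.castLE hb) := by
  ext i j
  simp [incl, Matrix.mul_apply, Matrix.one_apply, conjTranspose_apply]



section H3
variable {nt b : ℕ} (hb : b ≤ nt)

lemma Evec_pos {m : ℕ} {v : Fin m → ℂ} (hv : v ≠ 0) : 0 < Evec v := by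
  obtain ⟨i, hi⟩ : ∃ i, v i ≠ 0 := by
    by_contra h
    push_neg at h
    exact hv (funext h)
  have h1 : (0:ℝ) < ‖v i‖^2 := pow_pos (norm_pos_iff.mpr hi) 2
  have h2 : ‖v i‖^2 ≤ Evec v :=
    Finset.single_le_sum (fun j _ => sq_nonneg ‖v j‖) (Finset.mem_univ i)
  linarith

lemma posDef_conjTranspose_mul_self_of_inj {a c : ℕ} (M : Matrix (Fin a) (Fin c) ℂ)
    (h : ∀ x, M *ᵥ x = 0 → x = 0) : (Mᴴ * M).PosDef := by
  refine Matrix.PosDef.of_dotProduct_mulVec_pos (Matrix.isHermitian_conjTranspose_mul_self M) fun x hx => ?_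
  rw [dot_conjTranspose_mul, dot_star_self]
  rw [Complex.zero_lt_real]
  exact Evec_pos (fun h0 => hx (h x h0))

lemma submatrix_diagonal_castLE (d : Fin nt → ℂ) :
    (diagonal d).submatrix (Fin.castLE hb) (Fin.castLE hb)
      = diagonal (fun j => d (Fin.castLE hb j)) := by
  ext i j
  by_cases h : i = j
  · subst h; simp
  · rw [Matrix.submatrix_apply, Matrix.diagonal_apply_ne _ (fun hc => h (Fin.castLE_injective hb hc)),
      Matrix.diagonal_apply_ne _ h]

lemma det_one_add_conj {r : ℕ} (Hm : Matrix (Fin r) (Fin nt) ℂ)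
    (T X : Matrix (Fin nt) (Fin nt) ℂ) :
    (1 + Hm * (T * X * T) * Hmᴴ).det = (1 + X * (T * Hmᴴ * Hm * T)).det := by
  calc (1 + Hm * (T * X * T) * Hmᴴ).det
      = (1 + (Hm * T * X) * (T * Hmᴴ)).det := by rw [show Hm * (T * X * T) * Hmᴴ
          = (Hm * T * X) * (T * Hmᴴ) by simp only [Matrix.mul_assoc]]
    _ = (1 + (T * Hmᴴ) * (Hm * T * X)).det := det_one_add_mul_comm _ _
    _ = (1 + (T * Hmᴴ * Hm * T) * X).det := by rw [show (T * Hmᴴ) * (Hm * T * X)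
          = (T * Hmᴴ * Hm * T) * X by simp only [Matrix.mul_assoc]]
    _ = (1 + X * (T * Hmᴴ * Hm * T)).det := det_one_add_mul_comm _ _

end H3



set_option maxHeartbeats 1000000 in
theorem stmt0 {nr ne nt b : ℕ} (hb : b ≤ nt)
    (H : Matrix (Fin nr) (Fin nt) ℂ) (G : Matrix (Fin ne) (Fin nt) ℂ)
    (S : Matrix (Fin nt) (Fin nt) ℂ) (hS : S.PosSemidef)
    (C : Matrix (Fin nt) (Fin nt) ℂ) (hC : IsUnit C)
    (lam : Fin nt → ℝ)
    (hanti : Antitone lam)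
    (hpos : ∀ i, 0 < lam i)
    (hgt : ∀ i : Fin nt, (i : ℕ) < b ↔ 1 < lam i)
    (hGC : Cᴴ * (hS.sqrt * Gᴴ * G * hS.sqrt + 1) * C = 1)
    (hHC : Cᴴ * (hS.sqrt * Hᴴ * H * hS.sqrt + 1) * C
        = Matrix.diagonal fun i => (lam i : ℂ))
    (C₁ : Matrix (Fin nt) (Fin b) ℂ)
    (hC₁ : C₁ = fun i j => C i (Fin.castLE hb j))
    (Qs : Matrix (Fin nt) (Fin nt) ℂ)
    (hQs : Qs = hS.sqrt * C₁ * (C₁ᴴ * C₁)⁻¹ * C₁ᴴ * hS.sqrt) :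
    Qs.PosSemidef ∧ (S - Qs).PosSemidef ∧
    secrecyRate H G Qs
      = (∑ i : Fin nt, if (i : ℕ) < b then Real.log (lam i) else 0) ∧
    ∀ Q : Matrix (Fin nt) (Fin nt) ℂ, Q.IsHermitian → Q.PosSemidef →
      (S - Q).PosSemidef →
      secrecyRate H G Q
        ≤ (∑ i : Fin nt, if (i : ℕ) < b then Real.log (lam i) else 0) := by
  classical
  have hTpsd : (hS.sqrt).PosSemidef := hS.posSemidef_sqrt
  set T := hS.sqrt with hTdef
  have hTH : Tᴴ = T := hTpsd.1
  have hTT : T * T = S := hS.sqrt_mul_self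
  -- C inverse facts
  have hCdet : IsUnit C.det := (Matrix.isUnit_iff_isUnit_det C).mp hC
  have hCHdet : IsUnit (Cᴴ).det := by rw [Matrix.det_conjTranspose]; exact hCdet.star
  have hCCi : C * C⁻¹ = 1 := Matrix.mul_nonsing_inv C hCdet
  have hCHCiH : Cᴴ * (Cᴴ)⁻¹ = 1 := Matrix.mul_nonsing_inv _ hCHdet
  have hCiHCH : (Cᴴ)⁻¹ * Cᴴ = 1 := Matrix.nonsing_inv_mul _ hCHdet
  set KH := T * Hᴴ * H * T with hKHdef
  set KG := T * Gᴴ * G * T with hKGdef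
  set Λc : Matrix (Fin nt) (Fin nt) ℂ := Matrix.diagonal (fun i => (lam i : ℂ)) with hΛdef
  have hAeq : KG + 1 = (Cᴴ)⁻¹ * C⁻¹ := by
    calc KG + 1 = ((Cᴴ)⁻¹ * Cᴴ) * (KG + 1) * (C * C⁻¹) := by
          rw [hCiHCH, hCCi, Matrix.one_mul, Matrix.mul_one]
      _ = (Cᴴ)⁻¹ * (Cᴴ * (KG + 1) * C) * C⁻¹ := by simp only [Matrix.mul_assoc]
      _ = (Cᴴ)⁻¹ * C⁻¹ := by rw [hGC, Matrix.mul_one]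
  have hBeq : KH + 1 = (Cᴴ)⁻¹ * Λc * C⁻¹ := by
    calc KH + 1 = ((Cᴴ)⁻¹ * Cᴴ) * (KH + 1) * (C * C⁻¹) := by
          rw [hCiHCH, hCCi, Matrix.one_mul, Matrix.mul_one]
      _ = (Cᴴ)⁻¹ * (Cᴴ * (KH + 1) * C) * C⁻¹ := by simp only [Matrix.mul_assoc]
      _ = (Cᴴ)⁻¹ * Λc * C⁻¹ := by rw [hHC]
  -- C₁ facts
  have hC₁E : C₁ = C * incl hb := by rw [hC₁, mul_incl hb]; rfl
  have hG₀pd : (C₁ᴴ * C₁).PosDef := by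
    apply posDef_conjTranspose_mul_self_of_inj
    intro x hx
    have hx' : C *ᵥ (incl hb *ᵥ x) = 0 := by
      rw [mulVec_mulVec, ← hC₁E]; exact hx
    have hinj : Function.Injective (C.mulVec) := mulVec_injective_iff_isUnit.mpr hC
    have h0 : incl hb *ᵥ x = 0 := by
      apply hinj
      rw [hx', mulVec_zero]
    funext j
    have hxx : (incl hb *ᵥ x) (Fin.castLE hb j) = x j := by
      simp only [incl, Matrix.mulVec, dotProduct, Matrix.submatrix_apply, id_eq,
        Matrix.one_apply, Fin.castLE_inj]
      simp
    have := congrFun h0 (Fin.castLE hb j)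
    rw [hxx] at this
    simpa using this
  set M₀ := (C₁ᴴ * C₁)⁻¹ with hM₀def
  have hM₀pd : M₀.PosDef := hG₀pd.inv
  have hM₀H : M₀ᴴ = M₀ := hM₀pd.1
  have hG₀det : IsUnit (C₁ᴴ * C₁).det := (Matrix.isUnit_iff_isUnit_det _).mp hG₀pd.isUnit
  have hG₀M₀ : (C₁ᴴ * C₁) * M₀ = 1 := Matrix.mul_nonsing_inv _ hG₀det
  have hM₀G₀ : M₀ * (C₁ᴴ * C₁) = 1 := Matrix.nonsing_inv_mul _ hG₀det
  -- Part 1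
  have hQs2 : Qs = (C₁ᴴ * T)ᴴ * M₀ * (C₁ᴴ * T) := by
    rw [hQs, conjTranspose_mul, hTH, conjTranspose_conjTranspose]
    simp only [Matrix.mul_assoc]
  have part1 : Qs.PosSemidef := by
    rw [hQs2]
    exact hM₀pd.posSemidef.conjTranspose_mul_mul_same _
  -- Part 2
  set P := C₁ * M₀ * C₁ᴴ with hPdef
  have hPH : Pᴴ = P := by
    rw [hPdef, conjTranspose_mul, conjTranspose_mul, conjTranspose_conjTranspose, hM₀H]
    simp only [Matrix.mul_assoc]
  have hPP : P * P = P := by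
    calc P * P = C₁ * (M₀ * (C₁ᴴ * C₁)) * (M₀ * C₁ᴴ) := by
          rw [hPdef]; simp only [Matrix.mul_assoc]
      _ = C₁ * (M₀ * C₁ᴴ) := by rw [hM₀G₀, Matrix.mul_one]
      _ = P := by rw [hPdef]; simp only [Matrix.mul_assoc]
  have h1P : (1 - P)ᴴ * (1 - P) = 1 - P := by
    rw [conjTranspose_sub, conjTranspose_one, hPH, Matrix.mul_sub, Matrix.mul_one, Matrix.sub_mul, Matrix.one_mul, hPP,
      sub_self, sub_zero]
  have h1Ppsd : ((1 : Matrix (Fin nt) (Fin nt) ℂ) - P).PosSemidef := by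
    rw [← h1P]; exact Matrix.posSemidef_conjTranspose_mul_self _
  have hTPT : T * P * T = Qs := by
    rw [hQs, hPdef]; simp only [Matrix.mul_assoc]
  have hSQs : S - Qs = Tᴴ * (1 - P) * T := by
    rw [hTH, Matrix.mul_sub, Matrix.mul_one, Matrix.sub_mul, hTT, hTPT]
  have part2 : (S - Qs).PosSemidef := by
    rw [hSQs]
    exact h1Ppsd.conjTranspose_mul_mul_same T
  -- Part 3
  have conjC₁ : ∀ X : Matrix (Fin nt) (Fin nt) ℂ,
      C₁ᴴ * X * C₁ = (incl hb)ᴴ * (Cᴴ * X * C) * incl hb := by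
    intro X
    rw [hC₁E, conjTranspose_mul]
    simp only [Matrix.mul_assoc]
  have hBb : C₁ᴴ * (KH + 1) * C₁ = diagonal (fun j => (lam (Fin.castLE hb j) : ℂ)) := by
    rw [conjC₁, hHC, inclH_mul_incl, submatrix_diagonal_castLE]
  have hAb : C₁ᴴ * (KG + 1) * C₁ = 1 := by
    rw [conjC₁, hGC, inclH_mul_incl]
    rw [show (1 : Matrix (Fin nt) (Fin nt) ℂ) = diagonal (fun _ => 1) from (diagonal_one).symm,
      submatrix_diagonal_castLE]
    exact diagonal_one
  set Λb : Matrix (Fin b) (Fin b) ℂ := diagonal (fun j => (lam (Fin.castLE hb j) : ℂ)) with hΛbdef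
  have hexpand : ∀ X : Matrix (Fin nt) (Fin nt) ℂ,
      C₁ᴴ * (X + 1) * C₁ = C₁ᴴ * X * C₁ + C₁ᴴ * C₁ := by
    intro X
    rw [Matrix.mul_add, Matrix.mul_one, Matrix.add_mul]
  have hKHb : C₁ᴴ * KH * C₁ = Λb - C₁ᴴ * C₁ := by
    rw [hexpand] at hBb
    exact eq_sub_of_add_eq hBb
  have hKGb : C₁ᴴ * KG * C₁ = 1 - C₁ᴴ * C₁ := by
    rw [hexpand] at hAb
    exact eq_sub_of_add_eq hAb
  have hQs' : Qs = T * (C₁ * M₀ * C₁ᴴ) * T := by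
    rw [hQs]; simp only [Matrix.mul_assoc]
  have detH3 : (1 + H * Qs * Hᴴ).det = M₀.det * Λb.det := by
    calc (1 + H * Qs * Hᴴ).det = (1 + (C₁ * M₀ * C₁ᴴ) * KH).det := by
          rw [hQs']; exact det_one_add_conj H T _
      _ = (1 + C₁ * (M₀ * (C₁ᴴ * KH))).det := by simp only [Matrix.mul_assoc]
      _ = (1 + (M₀ * (C₁ᴴ * KH)) * C₁).det := det_one_add_mul_comm _ _
      _ = (1 + M₀ * (C₁ᴴ * KH * C₁)).det := by simp only [Matrix.mul_assoc]
      _ = (M₀ * Λb).det := by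
          rw [hKHb, Matrix.mul_sub, hM₀G₀]
          congr 1
          abel
      _ = M₀.det * Λb.det := det_mul _ _
  have detG3 : (1 + G * Qs * Gᴴ).det = M₀.det := by
    calc (1 + G * Qs * Gᴴ).det = (1 + (C₁ * M₀ * C₁ᴴ) * KG).det := by
          rw [hQs']; exact det_one_add_conj G T _
      _ = (1 + C₁ * (M₀ * (C₁ᴴ * KG))).det := by simp only [Matrix.mul_assoc]
      _ = (1 + (M₀ * (C₁ᴴ * KG)) * C₁).det := det_one_add_mul_comm _ _
      _ = (1 + M₀ * (C₁ᴴ * KG * C₁)).det := by simp only [Matrix.mul_assoc]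
      _ = M₀.det := by
          rw [hKGb, Matrix.mul_sub, hM₀G₀, Matrix.mul_one]
          congr 1
          abel
  have hm : 0 < M₀.det.re := det_re_pos hM₀pd
  set Pr := ∏ j : Fin b, lam (Fin.castLE hb j) with hPrdef
  have hPr : 0 < Pr := Finset.prod_pos fun j _ => hpos _
  have hΛbdet : Λb.det = ((Pr : ℝ) : ℂ) := by
    rw [hΛbdef, det_diagonal, hPrdef, Complex.ofReal_prod]
  have hdetH3re : (1 + H * Qs * Hᴴ).det.re = M₀.det.re * Pr := by
    have himM : M₀.det.im = 0 := by rw [det_eq_re hM₀pd]; simp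
    rw [detH3, hΛbdet, Complex.mul_re, Complex.ofReal_re, Complex.ofReal_im, himM]
    ring
  have hdetG3re : (1 + G * Qs * Gᴴ).det.re = M₀.det.re := by
    rw [detG3]
  have part3 : secrecyRate H G Qs
      = ∑ i : Fin nt, if (i : ℕ) < b then Real.log (lam i) else 0 := by
    unfold secrecyRate
    rw [hdetH3re, hdetG3re, Real.log_mul hm.ne' hPr.ne']
    rw [show Real.log M₀.det.re + Real.log Pr - Real.log M₀.det.re = Real.log Pr by ring]
    rw [hPrdef, Real.log_prod (fun j _ => (hpos (Fin.castLE hb j)).ne'),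
      sum_ite_castLE hb (fun i => Real.log (lam i))]
  -- Part 4
  refine ⟨part1, part2, part3, ?_⟩
  intro Q hQH hQpsd hSQ
  obtain ⟨W, hW, h1W, hTWT⟩ := douglas hTpsd hTT hQpsd hSQ
  have hQw : Q = T * W * T := hTWT.symm
  set F := hW.sqrt with hFdef
  have hF : F.PosSemidef := hW.posSemidef_sqrt
  have hFH : Fᴴ = F := hF.1
  have hFF : F * F = W := hW.sqrt_mul_self
  set NA := 1 + F * KG * F with hNAdef
  set NB := 1 + F * KH * F with hNBdef
  have hFKGF : F * KG * F = (G * T * F)ᴴ * (G * T * F) := by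
    rw [conjTranspose_mul, conjTranspose_mul, hTH, hFH, hKGdef]
    simp only [Matrix.mul_assoc]
  have hFKHF : F * KH * F = (H * T * F)ᴴ * (H * T * F) := by
    rw [conjTranspose_mul, conjTranspose_mul, hTH, hFH, hKHdef]
    simp only [Matrix.mul_assoc]
  have hNApd : NA.PosDef := by
    rw [hNAdef, hFKGF]
    exact Matrix.PosDef.add_posSemidef Matrix.PosDef.one
      (Matrix.posSemidef_conjTranspose_mul_self _)
  have hNBpd : NB.PosDef := by
    rw [hNBdef, hFKHF]
    exact Matrix.PosDef.add_posSemidef Matrix.PosDef.one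
      (Matrix.posSemidef_conjTranspose_mul_self _)
  have detG4 : (1 + G * Q * Gᴴ).det = NA.det := by
    calc (1 + G * Q * Gᴴ).det = (1 + W * KG).det := by
          rw [hQw]; exact det_one_add_conj G T W
      _ = (1 + F * (F * KG)).det := by rw [← hFF]; simp only [Matrix.mul_assoc]
      _ = (1 + (F * KG) * F).det := det_one_add_mul_comm _ _
      _ = NA.det := by rw [hNAdef]
  have detH4 : (1 + H * Q * Hᴴ).det = NB.det := by
    calc (1 + H * Q * Hᴴ).det = (1 + W * KH).det := by
          rw [hQw]; exact det_one_add_conj H T W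
      _ = (1 + F * (F * KH)).det := by rw [← hFF]; simp only [Matrix.mul_assoc]
      _ = (1 + (F * KH) * F).det := det_one_add_mul_comm _ _
      _ = NB.det := by rw [hNBdef]
  -- eigenvalue split
  set dp : Fin nt → ℝ := fun i => max (lam i - 1) 0 with hdpdef
  set dm : Fin nt → ℝ := fun i => max (1 - lam i) 0 with hdmdef
  set Δp : Matrix (Fin nt) (Fin nt) ℂ := diagonal (fun i => (dp i : ℂ)) with hΔpdef
  set Δm : Matrix (Fin nt) (Fin nt) ℂ := diagonal (fun i => (dm i : ℂ)) with hΔmdef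
  have hreal : ∀ i, lam i - 1 = dp i - dm i := by
    intro i
    simp only [hdpdef, hdmdef]
    rcases le_total (lam i) 1 with h | h
    · rw [max_eq_right (by linarith : lam i - 1 ≤ 0),
        max_eq_left (by linarith : (0:ℝ) ≤ 1 - lam i)]
      ring
    · rw [max_eq_left (by linarith : (0:ℝ) ≤ lam i - 1),
        max_eq_right (by linarith : 1 - lam i ≤ 0)]
      ring
  have hΛsplit : Λc - 1 = Δp - Δm := by
    rw [hΛdef, hΔpdef, hΔmdef, ← diagonal_one, diagonal_sub, diagonal_sub]
    have hf : (fun i => ((lam i : ℝ) : ℂ) - 1)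
        = fun i => ((dp i : ℝ) : ℂ) - ((dm i : ℝ) : ℂ) := by
      funext i
      rw [← Complex.ofReal_one, ← Complex.ofReal_sub, ← Complex.ofReal_sub, hreal i]
    rw [hf]
  have hΔppsd : Δp.PosSemidef := by
    rw [hΔpdef]
    exact Matrix.posSemidef_diagonal_iff.mpr
      (fun i => Complex.zero_le_real.mpr (le_max_right _ _))
  have hΔmpsd : Δm.PosSemidef := by
    rw [hΔmdef]
    exact Matrix.posSemidef_diagonal_iff.mpr
      (fun i => Complex.zero_le_real.mpr (le_max_right _ _))
  have hBAeq : KH - KG = (Cᴴ)⁻¹ * (Λc - 1) * C⁻¹ := by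
    have h1 : KH = (Cᴴ)⁻¹ * Λc * C⁻¹ - 1 := eq_sub_of_add_eq hBeq
    have h2 : KG = (Cᴴ)⁻¹ * C⁻¹ - 1 := eq_sub_of_add_eq hAeq
    rw [h1, h2, Matrix.mul_sub, Matrix.sub_mul, Matrix.mul_one]
    abel
  set Ei := F * (Cᴴ)⁻¹ with hEidef
  have hEiH : Eiᴴ = C⁻¹ * F := by
    rw [hEidef, conjTranspose_mul, conjTranspose_nonsing_inv, conjTranspose_conjTranspose, hFH]
  have hNBNA : NB = NA + Ei * (Λc - 1) * Eiᴴ := by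
    have h2 : Ei * (Λc - 1) * Eiᴴ = F * ((Cᴴ)⁻¹ * (Λc - 1) * C⁻¹) * F := by
      rw [hEidef, hEiH]; simp only [Matrix.mul_assoc]
    have h1 : F * (KH - KG) * F = F * KH * F - F * KG * F := by
      rw [Matrix.mul_sub, Matrix.sub_mul]
    rw [hNBdef, hNAdef, h2, ← hBAeq, h1]
    abel
  set Np := NA + Ei * Δp * Eiᴴ with hNpdef
  have hNpNB : (Np - NB).PosSemidef := by
    have key : Ei * Δm * Eiᴴ = Ei * Δp * Eiᴴ - Ei * (Λc - 1) * Eiᴴ := by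
      rw [show Δm = Δp - (Λc - 1) by rw [hΛsplit]; abel, Matrix.mul_sub, Matrix.sub_mul]
    have : Np - NB = Ei * Δm * Eiᴴ := by
      rw [hNpdef, hNBNA, key]; abel
    rw [this]
    exact hΔmpsd.mul_mul_conjTranspose_same Ei
  have hNAdet : IsUnit NA.det := (Matrix.isUnit_iff_isUnit_det _).mp hNApd.isUnit
  have hNAipd : (NA⁻¹).PosDef := hNApd.inv
  set R := hNAipd.posSemidef.sqrt with hRdef
  have hRpsd : R.PosSemidef := hNAipd.posSemidef.posSemidef_sqrt
  have hRH : Rᴴ = R := hRpsd.1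
  have hRR : R * R = NA⁻¹ := hNAipd.posSemidef.sqrt_mul_self
  have hRNR : R * NA * R = 1 := by
    have h1 : R * (R * NA) = 1 := by
      rw [← Matrix.mul_assoc, hRR]
      exact Matrix.nonsing_inv_mul _ hNAdet
    exact mul_eq_one_comm.mp h1
  set D := R * Ei with hDdef
  have hDH : Dᴴ = Eiᴴ * R := by rw [hDdef, conjTranspose_mul, hRH]
  have hEiEi : Ei * Eiᴴ = F * KG * F + W := by
    calc Ei * Eiᴴ = F * ((Cᴴ)⁻¹ * C⁻¹) * F := by
          rw [hEidef, hEiH]; simp only [Matrix.mul_assoc]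
      _ = F * (KG + 1) * F := by rw [← hAeq]
      _ = F * KG * F + W := by rw [Matrix.mul_add, Matrix.mul_one, Matrix.add_mul, hFF]
  have hDDH : 1 - D * Dᴴ = R * (1 - W) * R := by
    have h1 : D * Dᴴ = R * (F * KG * F + W) * R := by
      rw [hDdef, hDH, show R * Ei * (Eiᴴ * R) = R * (Ei * Eiᴴ) * R by
        simp only [Matrix.mul_assoc], hEiEi]
    have h2 : (1 : Matrix (Fin nt) (Fin nt) ℂ) - W = NA - (F * KG * F + W) := by
      rw [hNAdef]; abel
    rw [h1, h2, Matrix.mul_sub, Matrix.sub_mul, hRNR]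
  have h1DDH : ((1 : Matrix (Fin nt) (Fin nt) ℂ) - D * Dᴴ).PosSemidef := by
    rw [hDDH]
    have := h1W.mul_mul_conjTranspose_same R
    rwa [hRH] at this
  have hDHD : ((1 : Matrix (Fin nt) (Fin nt) ℂ) - Dᴴ * D).PosSemidef := psd_swap D h1DDH
  -- square root of Δp
  set sΔ : Matrix (Fin nt) (Fin nt) ℂ := diagonal (fun i => ((Real.sqrt (dp i) : ℝ) : ℂ))
    with hsΔdef
  have hdpnn : ∀ i, (0:ℝ) ≤ dp i := fun i => le_max_right _ _
  have hsΔH : sΔᴴ = sΔ := by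
    rw [hsΔdef, diagonal_conjTranspose]
    have hf : (star fun i => ((Real.sqrt (dp i) : ℝ) : ℂ))
        = fun i => ((Real.sqrt (dp i) : ℝ) : ℂ) :=
      funext fun i => Complex.conj_ofReal _
    rw [hf]
  have hsΔsΔ : sΔ * sΔ = Δp := by
    rw [hsΔdef, hΔpdef, diagonal_mul_diagonal]
    have hf : (fun i => ((Real.sqrt (dp i) : ℝ) : ℂ) * ((Real.sqrt (dp i) : ℝ) : ℂ))
        = fun i => ((dp i : ℝ) : ℂ) := by
      funext i
      rw [← Complex.ofReal_mul, Real.mul_self_sqrt (hdpnn i)]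
    rw [hf]
  -- determinant factorization
  have hDΔpDH : (D * Δp * Dᴴ).PosSemidef := hΔppsd.mul_mul_conjTranspose_same D
  have h1DΔpDHpd : (1 + D * Δp * Dᴴ).PosDef :=
    Matrix.PosDef.add_posSemidef Matrix.PosDef.one hDΔpDH
  have detNp : Np.det = NA.det * (1 + D * Δp * Dᴴ).det := by
    have hfact : Np = NA * (1 + NA⁻¹ * (Ei * Δp * Eiᴴ)) := by
      rw [Matrix.mul_add, Matrix.mul_one, ← Matrix.mul_assoc, Matrix.mul_nonsing_inv _ hNAdet, Matrix.one_mul,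
        hNpdef]
    rw [hfact, det_mul]
    congr 1
    calc (1 + NA⁻¹ * (Ei * Δp * Eiᴴ)).det
        = (1 + R * (R * (Ei * Δp * Eiᴴ))).det := by rw [← hRR]; simp only [Matrix.mul_assoc]
      _ = (1 + (R * (Ei * Δp * Eiᴴ)) * R).det := det_one_add_mul_comm _ _
      _ = (1 + D * Δp * Dᴴ).det := by rw [hDdef, hDH]; simp only [Matrix.mul_assoc]
  have detDp : (1 + D * Δp * Dᴴ).det = (1 + sΔ * (Dᴴ * D) * sΔ).det := by
    calc (1 + D * Δp * Dᴴ).det = (1 + (D * sΔ) * (sΔ * Dᴴ)).det := by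
          rw [← hsΔsΔ]; simp only [Matrix.mul_assoc]
      _ = (1 + (sΔ * Dᴴ) * (D * sΔ)).det := det_one_add_mul_comm _ _
      _ = (1 + sΔ * (Dᴴ * D) * sΔ).det := by simp only [Matrix.mul_assoc]
  have hsqpsd : (sΔ * (Dᴴ * D) * sΔ).PosSemidef := by
    have := (Matrix.posSemidef_conjTranspose_mul_self D).mul_mul_conjTranspose_same sΔ
    rwa [hsΔH, show sΔ * (Dᴴ * D) * sΔ = sΔ * (Dᴴ * D) * sΔ from rfl] at this
  have h1sqpd : (1 + sΔ * (Dᴴ * D) * sΔ).PosDef :=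
    Matrix.PosDef.add_posSemidef Matrix.PosDef.one hsqpsd
  have hmono : (1 + sΔ * (Dᴴ * D) * sΔ).det.re ≤ (1 + Δp).det.re := by
    apply det_re_le_of_psd_le h1sqpd
    have hdiff : (1 + Δp) - (1 + sΔ * (Dᴴ * D) * sΔ) = sΔ * (1 - Dᴴ * D) * sΔ := by
      rw [Matrix.mul_sub, Matrix.sub_mul, Matrix.mul_one, hsΔsΔ]
      abel
    rw [hdiff]
    have := hDHD.mul_mul_conjTranspose_same sΔ
    rwa [hsΔH] at this
  set Pb := ∏ i : Fin nt, (if (i : ℕ) < b then lam i else 1) with hPbdef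
  have hPb : 0 < Pb := Finset.prod_pos (fun i _ => by
    by_cases h : (i : ℕ) < b
    · rw [if_pos h]; exact hpos i
    · rw [if_neg h]; exact one_pos)
  have hdet1Δp : (1 + Δp).det.re = Pb := by
    have h2 : (1 + Δp : Matrix (Fin nt) (Fin nt) ℂ)
        = diagonal (fun i => ((1 + dp i : ℝ) : ℂ)) := by
      rw [hΔpdef, ← diagonal_one, diagonal_add]
      congr 1
      funext i
      simp
    rw [h2, det_diagonal, ← Complex.ofReal_prod, Complex.ofReal_re, hPbdef]
    apply Finset.prod_congr rfl
    intro i _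
    by_cases h : (i : ℕ) < b
    · rw [if_pos h]
      have := (hgt i).mp h
      simp only [hdpdef]
      rw [max_eq_left (by linarith : (0:ℝ) ≤ lam i - 1)]
      ring
    · rw [if_neg h]
      have : ¬ (1 < lam i) := fun hc => h ((hgt i).mpr hc)
      simp only [hdpdef]
      rw [max_eq_right (by linarith : lam i - 1 ≤ 0)]
      ring
  -- combine
  have ha : 0 < NA.det.re := det_re_pos hNApd
  have hs : 0 < (1 + D * Δp * Dᴴ).det.re := det_re_pos h1DΔpDHpd
  have hNp_re : Np.det.re = NA.det.re * (1 + D * Δp * Dᴴ).det.re := by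
    have himA : NA.det.im = 0 := by rw [det_eq_re hNApd]; simp
    have himD : (1 + D * Δp * Dᴴ).det.im = 0 := by rw [det_eq_re h1DΔpDHpd]; simp
    rw [detNp, Complex.mul_re, himA, himD]
    ring
  have hs_le : (1 + D * Δp * Dᴴ).det.re ≤ Pb := by
    calc (1 + D * Δp * Dᴴ).det.re = (1 + sΔ * (Dᴴ * D) * sΔ).det.re := by rw [detDp]
      _ ≤ (1 + Δp).det.re := hmono
      _ = Pb := hdet1Δp
  have hNB_le : NB.det.re ≤ NA.det.re * Pb := by
    calc NB.det.re ≤ Np.det.re := det_re_le_of_psd_le hNBpd hNpNB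
      _ = NA.det.re * (1 + D * Δp * Dᴴ).det.re := hNp_re
      _ ≤ NA.det.re * Pb := mul_le_mul_of_nonneg_left hs_le ha.le
  have hNBpos : 0 < NB.det.re := det_re_pos hNBpd
  unfold secrecyRate
  have hHre : (1 + H * Q * Hᴴ).det.re = NB.det.re := by rw [detH4]
  have hGre : (1 + G * Q * Gᴴ).det.re = NA.det.re := by rw [detG4]
  rw [hHre, hGre]
  have hlog : Real.log NB.det.re ≤ Real.log NA.det.re + Real.log Pb := by
    calc Real.log NB.det.re ≤ Real.log (NA.det.re * Pb) :=
          Real.log_le_log hNBpos hNB_le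
      _ = Real.log NA.det.re + Real.log Pb := Real.log_mul ha.ne' hPb.ne'
  have hlogPb : Real.log Pb = ∑ i : Fin nt, if (i : ℕ) < b then Real.log (lam i) else 0 := by
    rw [hPbdef, Real.log_prod (fun i _ => by
      by_cases h : (i : ℕ) < b
      · rw [if_pos h]; exact (hpos i).ne'
      · rw [if_neg h]; exact one_ne_zero)]
    apply Finset.sum_congr rfl
    intro i _
    by_cases h : (i : ℕ) < b
    · rw [if_pos h, if_pos h]
    · rw [if_neg h, if_neg h, Real.log_one]
  linarith [hlog, hlogPb]
end Helpers2
end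

section
/- If HᴴH ⪯ GᴴG (i.e., GᴴG − HᴴH is positive semidefinite), then for every n_t×n_t Hermitian positive semidefinite complex matrix Q one has det(I + H Q Hᴴ) ≤ det(I + G Q Gᴴ), i.e., R(Q) ≤ 0; consequently the secrecy capacity is 0 under any power constraint. -/
open Matrix
open scoped ComplexOrder
open scoped MatrixOrder

lemma det_one_add_psd {n : ℕ} {E : Matrix (Fin n) (Fin n) ℂ} (hE : E.PosSemidef) :
    ∃ r : ℝ, 1 ≤ r ∧ (1 + E).det = (r : ℂ) := by
  have hH := hE.1
  set U : Matrix (Fin n) (Fin n) ℂ := (hH.eigenvectorUnitary : Matrix (Fin n) (Fin n) ℂ) with hUdef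
  have hU : U * star U = 1 := (Matrix.mem_unitaryGroup_iff).mp hH.eigenvectorUnitary.2
  have hspec := hH.spectral_theorem
  rw [Unitary.conjStarAlgAut_apply, ← hUdef] at hspec
  have key : (1 + E) = U * (1 + diagonal (RCLike.ofReal ∘ hH.eigenvalues)) * star U := by
    rw [Matrix.mul_add, Matrix.add_mul, Matrix.mul_one, hU, ← hspec]
  refine ⟨∏ i, (1 + hH.eigenvalues i), ?_, ?_⟩
  · calc (1:ℝ) = ∏ _i : Fin n, (1:ℝ) := by simp
      _ ≤ ∏ i, (1 + hH.eigenvalues i) := by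
          apply Finset.prod_le_prod
          · intros; norm_num
          · intro i _; have := hE.eigenvalues_nonneg i; linarith
  · rw [key, det_mul_right_comm, hU, Matrix.one_mul]
    have hd : (1 : Matrix (Fin n) (Fin n) ℂ) + diagonal (RCLike.ofReal ∘ hH.eigenvalues)
        = diagonal (fun i => ((1 + hH.eigenvalues i : ℝ) : ℂ)) := by
      rw [← Matrix.diagonal_one, diagonal_add]
      funext i
      push_cast
      simp
    rw [hd, det_diagonal]
    push_cast
    ring

lemma det_one_add_mono {n : ℕ} {A D : Matrix (Fin n) (Fin n) ℂ}
    (hA : A.PosSemidef) (hD : D.PosSemidef) :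
    (1 + A).det.re ≤ (1 + A + D).det.re := by
  obtain ⟨s, hs1, hsA⟩ := det_one_add_psd hA
  have h1A : (1 + A).PosDef := Matrix.PosDef.one.add_posSemidef hA
  set T := CFC.sqrt (1 + A) with hTdef
  have hT : T.PosSemidef := (CFC.sqrt_nonneg _).posSemidef
  have hTT : T * T = 1 + A := CFC.sqrt_mul_sqrt_self _ h1A.posSemidef.nonneg
  have hdetT : IsUnit T.det := by
    have h2 : T.det * T.det = (1 + A).det := by rw [← det_mul, hTT]
    have : (1 + A).det ≠ 0 := h1A.det_pos.ne'
    exact isUnit_iff_ne_zero.mpr (fun h => this (by rw [← h2, h, mul_zero]))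
  have hTi : T * T⁻¹ = 1 := mul_nonsing_inv _ hdetT
  have hiT : T⁻¹ * T = 1 := nonsing_inv_mul _ hdetT
  have hTinvH : T⁻¹ᴴ = T⁻¹ := by rw [conjTranspose_nonsing_inv, hT.1]
  have hE : (T⁻¹ * D * T⁻¹).PosSemidef := by
    have := hD.conjTranspose_mul_mul_same T⁻¹
    rwa [hTinvH] at this
  obtain ⟨r, hr1, hrE⟩ := det_one_add_psd hE
  have key : 1 + A + D = T * (1 + T⁻¹ * D * T⁻¹) * T := by
    rw [Matrix.mul_add, Matrix.mul_one, Matrix.add_mul, hTT]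
    congr 1
    symm
    calc T * (T⁻¹ * D * T⁻¹) * T = (T * T⁻¹) * D * (T⁻¹ * T) := by
          simp only [Matrix.mul_assoc]
      _ = D := by rw [hTi, hiT, Matrix.one_mul, Matrix.mul_one]
  have hdet : (1 + A + D).det = ((s * r : ℝ) : ℂ) := by
    rw [key, det_mul_right_comm, det_mul, hTT, hsA, hrE]
    push_cast
    ring
  rw [hdet, hsA]
  simp only [Complex.ofReal_re]
  nlinarith

/-- If `HᴴH ⪯ GᴴG` then `R(Q) ≤ 0` for every PSD `Q`:
the secrecy capacity is zero under any power constraint. -/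
theorem stmt1 {nr ne nt : ℕ}
    (H : Matrix (Fin nr) (Fin nt) ℂ) (G : Matrix (Fin ne) (Fin nt) ℂ)
    (hHG : (Gᴴ * G - Hᴴ * H).PosSemidef) :
    ∀ Q : Matrix (Fin nt) (Fin nt) ℂ, Q.IsHermitian → Q.PosSemidef →
      (1 + H * Q * Hᴴ).det.re ≤ (1 + G * Q * Gᴴ).det.re ∧
      secrecyRate H G Q ≤ 0 := by
  intro Q _ hQ
  set S := CFC.sqrt Q with hSdef
  have hS : S.PosSemidef := (CFC.sqrt_nonneg _).posSemidef
  have hSS : S * S = Q := CFC.sqrt_mul_sqrt_self _ hQ.nonneg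
  have hSH : Sᴴ = S := hS.1
  -- rewrite H*Q*Hᴴ as (H*S)*(H*S)ᴴ
  have hfac : ∀ {m : ℕ} (M : Matrix (Fin m) (Fin nt) ℂ),
      M * Q * Mᴴ = (M * S) * (M * S)ᴴ := by
    intro m M
    rw [conjTranspose_mul, hSH, ← hSS]
    simp only [Matrix.mul_assoc]
  have hcomm : ∀ {m : ℕ} (M : Matrix (Fin m) (Fin nt) ℂ),
      (1 + M * Q * Mᴴ).det = (1 + (M * S)ᴴ * (M * S)).det := by
    intro m M
    rw [hfac M, det_one_add_mul_comm]
  set A := (H * S)ᴴ * (H * S) with hAdef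
  set B := (G * S)ᴴ * (G * S) with hBdef
  have hApsd : A.PosSemidef := posSemidef_conjTranspose_mul_self _
  have hDpsd : (Sᴴ * (Gᴴ * G - Hᴴ * H) * S).PosSemidef :=
    hHG.conjTranspose_mul_mul_same S
  have hBD : 1 + B = 1 + A + Sᴴ * (Gᴴ * G - Hᴴ * H) * S := by
    rw [hAdef, hBdef]
    simp only [conjTranspose_mul, hSH, Matrix.mul_sub, Matrix.sub_mul, Matrix.mul_assoc]
    noncomm_ring
  have hmain : (1 + H * Q * Hᴴ).det.re ≤ (1 + G * Q * Gᴴ).det.re := by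
    have h1 := det_one_add_mono hApsd hDpsd
    rw [← hBD] at h1
    rw [hcomm H, hcomm G]
    exact h1
  refine ⟨hmain, ?_⟩
  have hHpsd : (H * Q * Hᴴ).PosSemidef := hQ.mul_mul_conjTranspose_same H
  obtain ⟨x, hx1, hxd⟩ := det_one_add_psd hHpsd
  have hxpos : 0 < (1 + H * Q * Hᴴ).det.re := by
    rw [hxd]; simpa using lt_of_lt_of_le one_pos hx1
  unfold secrecyRate
  have := Real.log_le_log hxpos hmain
  linarith
end

section
/- Let S be an n_t×n_t Hermitian positive semidefinite complex matrix, and let C = [C_1 C_2] be an invertible n_t×n_t complex matrix (C_1 having b columns) such that Cᴴ(S^{1/2}HᴴH S^{1/2} + I)C = blockdiag(Λ_1, Λ_2) with Λ_1, Λ_2 diagonal, and Cᴴ(S^{1/2}GᴴG S^{1/2} + I)C = I. If the column space of C_1 equals the column space of S, then Λ_2 = I; that is, the pencil (S^{1/2}HᴴH S^{1/2} + I, S^{1/2}GᴴG S^{1/2} + I) has no generalized eigenvalue less than one. -/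
open Matrix
open scoped ComplexOrder

/-- Sandwiching with submatrices of `C`. -/
lemma submatrix_conj_sandwich {n α β : Type*} [Fintype n]
    (M C : Matrix n n ℂ) (f : α → n) (g : β → n) :
    (Cᴴ * M * C).submatrix f g = (C.submatrix id f)ᴴ * M * (C.submatrix id g) := by
  ext i j
  simp only [Matrix.submatrix_apply, Matrix.mul_apply, Matrix.conjTranspose_apply,
    Matrix.submatrix_apply, id_eq]

/-- If the column space of `C₁` equals the column space of `S`, then `Λ₂ = I`:
the pencil `(S^{1/2}HᴴH S^{1/2}+I, S^{1/2}GᴴG S^{1/2}+I)` has no generalized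
eigenvalue less than one.  (The `n_t` transmit antennas are indexed by
`Fin b ⊕ Fin c`, matching the partition `C = [C₁ C₂]`.) -/
theorem stmt3 {nr ne b c : ℕ}
    (H : Matrix (Fin nr) (Fin b ⊕ Fin c) ℂ) (G : Matrix (Fin ne) (Fin b ⊕ Fin c) ℂ)
    (S : Matrix (Fin b ⊕ Fin c) (Fin b ⊕ Fin c) ℂ) (hS : S.PosSemidef)
    (C : Matrix (Fin b ⊕ Fin c) (Fin b ⊕ Fin c) ℂ) (hC : IsUnit C)
    (d₁ : Fin b → ℂ) (d₂ : Fin c → ℂ)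
    (hHC : Cᴴ * (hS.sqrt * Hᴴ * H * hS.sqrt + 1) * C
        = Matrix.fromBlocks (Matrix.diagonal d₁) 0 0 (Matrix.diagonal d₂))
    (hGC : Cᴴ * (hS.sqrt * Gᴴ * G * hS.sqrt + 1) * C = 1)
    (C₁ : Matrix (Fin b ⊕ Fin c) (Fin b) ℂ)
    (hC₁ : C₁ = C.submatrix id Sum.inl)
    (hspan : Submodule.span ℂ (Set.range fun j i => C₁ i j)
           = Submodule.span ℂ (Set.range fun j i => S i j)) :
    Matrix.diagonal d₂ = (1 : Matrix (Fin c) (Fin c) ℂ) := by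
  classical
  set R : Matrix (Fin b ⊕ Fin c) (Fin b ⊕ Fin c) ℂ := hS.sqrt with hRdef
  have hRR : R * R = S := by
    rw [hRdef]
    unfold Matrix.PosSemidef.sqrt
    conv_rhs => rw [hS.1.spectral_theorem, Unitary.conjStarAlgAut_apply]
    have hu : (star hS.1.eigenvectorUnitary : Matrix (Fin b ⊕ Fin c) (Fin b ⊕ Fin c) ℂ)
        * hS.1.eigenvectorUnitary.1 = 1 := by simp
    calc _ = hS.1.eigenvectorUnitary.1 * (diagonal ((↑) ∘ (√·) ∘ hS.1.eigenvalues)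
          * ((star hS.1.eigenvectorUnitary : Matrix (Fin b ⊕ Fin c) (Fin b ⊕ Fin c) ℂ)
          * hS.1.eigenvectorUnitary.1) * diagonal ((↑) ∘ (√·) ∘ hS.1.eigenvalues))
          * (star hS.1.eigenvectorUnitary : Matrix (Fin b ⊕ Fin c) (Fin b ⊕ Fin c) ℂ) := by
            simp only [Matrix.mul_assoc]; rfl
      _ = _ := by
        rw [hu, Matrix.mul_one, diagonal_mul_diagonal]
        congr 3
        ext i
        simp only [Function.comp_apply]
        simp only [← RCLike.ofReal_mul, ← Complex.ofReal_mul, Real.mul_self_sqrt (hS.eigenvalues_nonneg i)]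
        rfl
  have hRH : Rᴴ = R := by
    rw [hRdef]
    unfold Matrix.PosSemidef.sqrt
    have hf : star (Complex.ofReal ∘ (fun x => √x) ∘ hS.1.eigenvalues)
        = Complex.ofReal ∘ (fun x => √x) ∘ hS.1.eigenvalues := by
      funext i; simp
    simp [Matrix.conjTranspose_mul, Matrix.mul_assoc, diagonal_conjTranspose, hf,
      Matrix.star_eq_conjTranspose]
  clear_value R
  clear hRdef
  -- the column space of `R` equals the column space of `S`
  have hrange : LinearMap.range R.mulVecLin = LinearMap.range S.mulVecLin := by
    have hle : LinearMap.range S.mulVecLin ≤ LinearMap.range R.mulVecLin := by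
      rw [← hRR, Matrix.mulVecLin_mul]
      exact LinearMap.range_comp_le_range _ _
    refine (Submodule.eq_of_le_of_finrank_le hle ?_).symm
    have h1 : S.rank = R.rank := by
      have h2 : S = Rᴴ * R := by rw [hRH, hRR]
      rw [h2]
      exact Matrix.rank_conjTranspose_mul_self _
    rw [Matrix.rank, Matrix.rank] at h1
    exact le_of_eq h1.symm
  -- so each column of `R` lies in the column span of `C₁`
  have hcol : ∀ j, (fun i => R i j) ∈ Submodule.span ℂ (Set.range fun j i => C₁ i j) := by
    intro j
    rw [hspan]
    have : (fun i => R i j) ∈ LinearMap.range R.mulVecLin := by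
      rw [Matrix.range_mulVecLin]
      exact Submodule.subset_span ⟨j, rfl⟩
    rw [hrange, Matrix.range_mulVecLin] at this
    exact this
  choose g hg using fun j => (Submodule.mem_span_range_iff_exists_fun ℂ).1 (hcol j)
  -- the coefficient matrix `N` with `R = C₁ * N`
  set N : Matrix (Fin b) (Fin b ⊕ Fin c) ℂ := Matrix.of (fun i j => g j i) with hNdef
  have hRN : R = C₁ * N := by
    ext a j
    have := congrFun (hg j) a
    simp only [Finset.sum_apply, Pi.smul_apply, smul_eq_mul] at this
    rw [Matrix.mul_apply]
    rw [← this]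
    simp [hNdef, mul_comm]
  have hRN' : R = Nᴴ * C₁ᴴ := by
    conv_lhs => rw [← hRH, hRN]
    rw [Matrix.conjTranspose_mul]
  set C₂ : Matrix (Fin b ⊕ Fin c) (Fin c) ℂ := C.submatrix id Sum.inr with hC₂def
  -- extract blocks of the two hypotheses
  have hA12 : C₁ᴴ * (R * Hᴴ * H * R + 1) * C₂ = 0 := by
    rw [hC₁, hC₂def, ← submatrix_conj_sandwich, hHC]
    ext i j
    simp [Matrix.fromBlocks]
  have hB12 : C₁ᴴ * (R * Gᴴ * G * R + 1) * C₂ = 0 := by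
    rw [hC₁, hC₂def, ← submatrix_conj_sandwich, hGC]
    ext i j
    simp [Matrix.one_apply]
  have hA22 : C₂ᴴ * (R * Hᴴ * H * R + 1) * C₂ = Matrix.diagonal d₂ := by
    rw [hC₂def, ← submatrix_conj_sandwich, hHC]
    ext i j
    simp [Matrix.fromBlocks, Matrix.diagonal_apply, Sum.inr.injEq]
  have hB22 : C₂ᴴ * (R * Gᴴ * G * R + 1) * C₂ = 1 := by
    rw [hC₂def, ← submatrix_conj_sandwich, hGC]
    ext i j
    simp [Matrix.one_apply, Sum.inr.injEq]
  -- the difference matrix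
  set X : Matrix (Fin b ⊕ Fin c) (Fin b ⊕ Fin c) ℂ :=
    R * Hᴴ * H * R - R * Gᴴ * G * R with hXdef
  have hXsplit : X = (R * Hᴴ * H * R + 1) - (R * Gᴴ * G * R + 1) := by
    rw [hXdef]; abel
  have hX12 : C₁ᴴ * X * C₂ = 0 := by
    rw [hXsplit, Matrix.mul_sub, Matrix.sub_mul, hA12, hB12, sub_zero]
  have hX22 : C₂ᴴ * X * C₂ = Matrix.diagonal d₂ - 1 := by
    rw [hXsplit, Matrix.mul_sub, Matrix.sub_mul, hA22, hB22]
  -- rewrite `X` through `C₁`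
  set W : Matrix (Fin b) (Fin b) ℂ := N * Hᴴ * H * Nᴴ - N * Gᴴ * G * Nᴴ with hWdef
  have hXW : X = C₁ * W * C₁ᴴ := by
    have e1 : R * Hᴴ * H * R = C₁ * (N * Hᴴ * H * Nᴴ) * C₁ᴴ := by
      nth_rewrite 1 [hRN]
      rw [hRN']
      simp only [Matrix.mul_assoc]
    have e2 : R * Gᴴ * G * R = C₁ * (N * Gᴴ * G * Nᴴ) * C₁ᴴ := by
      nth_rewrite 1 [hRN]
      rw [hRN']
      simp only [Matrix.mul_assoc]
    rw [hXdef, hWdef, e1, e2, Matrix.mul_sub, Matrix.sub_mul]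
  -- the key cancellation
  set Z : Matrix (Fin b ⊕ Fin c) (Fin c) ℂ := C₁ * (W * (C₁ᴴ * C₂)) with hZdef
  have hZ0 : Z = 0 := by
    have h1 : C₁ᴴ * Z = 0 := by
      have h := hX12
      rw [hXW] at h
      simp only [Matrix.mul_assoc] at h ⊢
      exact h
    have h2 : Zᴴ * Z = 0 := by
      nth_rewrite 1 [hZdef]
      rw [Matrix.conjTranspose_mul, Matrix.mul_assoc, h1, Matrix.mul_zero]
    exact Matrix.conjTranspose_mul_self_eq_zero.mp h2
  have hfinal : Matrix.diagonal d₂ - 1 = 0 := by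
    rw [← hX22, hXW]
    simp only [Matrix.mul_assoc]
    rw [← hZdef, hZ0, Matrix.mul_zero]
  exact sub_eq_zero.mp hfinal
end

section
/- Let M be an n×n Hermitian complex matrix and let m be the number of positive eigenvalues of M (counted with multiplicity). For any n×n complex matrix B, if BᴴM B is positive semidefinite, then rank(BᴴM B) ≤ m. -/
open Matrix
open scoped ComplexOrder

lemma aux_rank_le_of_ker {n : ℕ} (A C : Matrix (Fin n) (Fin n) ℂ)
    (h : ∀ x, C *ᵥ x = 0 → A *ᵥ x = 0) : A.rank ≤ C.rank := by
  have hker : LinearMap.ker C.mulVecLin ≤ LinearMap.ker A.mulVecLin := by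
    intro x hx
    exact h x hx
  have h1 := A.mulVecLin.finrank_range_add_finrank_ker
  have h2 := C.mulVecLin.finrank_range_add_finrank_ker
  have h3 := Submodule.finrank_mono hker
  rw [Matrix.rank, Matrix.rank]
  omega

/-- If `M` is Hermitian with `m` positive eigenvalues (with multiplicity) and
`BᴴMB` is PSD, then `rank(BᴴMB) ≤ m`. -/
theorem stmt5 {n : ℕ}
    (M : Matrix (Fin n) (Fin n) ℂ) (hM : M.IsHermitian)
    (m : ℕ) (hm : m = (Finset.univ.filter fun i => 0 < hM.eigenvalues i).card)
    (B : Matrix (Fin n) (Fin n) ℂ)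
    (hPSD : (Bᴴ * M * B).PosSemidef) :
    (Bᴴ * M * B).rank ≤ m := by
  classical
  set U : Matrix (Fin n) (Fin n) ℂ := (hM.eigenvectorUnitary : Matrix (Fin n) (Fin n) ℂ) with hU
  set d : Fin n → ℂ := fun i => if 0 < hM.eigenvalues i then (hM.eigenvalues i : ℂ) else 0 with hd
  set C : Matrix (Fin n) (Fin n) ℂ := Bᴴ * (U * diagonal d * star U) * B with hC
  -- C - BᴴMB is PSD
  have hdiff : C - Bᴴ * M * B
      = Bᴴ * (U * diagonal (fun i => d i - (hM.eigenvalues i : ℂ)) * star U) * B := by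
    conv_lhs => rw [hM.spectral_theorem]
    have : diagonal (fun i => d i - (hM.eigenvalues i : ℂ))
        = diagonal d - diagonal (RCLike.ofReal ∘ hM.eigenvalues) := by
      rw [← Matrix.diagonal_sub]
      rfl
    rw [this]
    simp only [hC, Matrix.mul_sub, Matrix.sub_mul, Unitary.conjStarAlgAut_apply, Unitary.coe_star, ← hU]
  have hDpsd : (diagonal (fun i => d i - (hM.eigenvalues i : ℂ))).PosSemidef := by
    rw [posSemidef_diagonal_iff]
    intro i
    by_cases hpos : 0 < hM.eigenvalues i
    · simp [hd, hpos]
    · simp only [hd, if_neg hpos, zero_sub]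
      rw [← Complex.ofReal_neg]
      exact_mod_cast neg_nonneg.mpr (le_of_not_gt hpos)
  have hCApsd : (C - Bᴴ * M * B).PosSemidef := by
    rw [hdiff]
    exact ((hDpsd.mul_mul_conjTranspose_same U).conjTranspose_mul_mul_same B)
  -- kernel inclusion
  have hker : ∀ x, C *ᵥ x = 0 → (Bᴴ * M * B) *ᵥ x = 0 := by
    intro x hx
    have h1 : 0 ≤ star x ⬝ᵥ (Bᴴ * M * B) *ᵥ x := hPSD.dotProduct_mulVec_nonneg x
    have h2 : 0 ≤ star x ⬝ᵥ (C - Bᴴ * M * B) *ᵥ x := hCApsd.dotProduct_mulVec_nonneg x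
    rw [Matrix.sub_mulVec, hx, zero_sub, dotProduct_neg, le_neg, neg_zero] at h2
    exact (hPSD.dotProduct_mulVec_zero_iff x).mp (le_antisymm h2 h1)
  refine le_trans (aux_rank_le_of_ker _ _ hker) ?_
  -- rank C ≤ m
  have hrC : C.rank ≤ (diagonal d).rank := by
    calc C.rank ≤ (Bᴴ * (U * diagonal d * star U)).rank := Matrix.rank_mul_le_left _ _
    _ ≤ (U * diagonal d * star U).rank := Matrix.rank_mul_le_right _ _
    _ ≤ (U * diagonal d).rank := Matrix.rank_mul_le_left _ _
    _ ≤ (diagonal d).rank := Matrix.rank_mul_le_right _ _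
  refine hrC.trans ?_
  rw [Matrix.rank_diagonal, hm, Fintype.card_subtype]
  apply le_of_eq
  congr 1
  ext i
  simp only [Finset.mem_filter, Finset.mem_univ, true_and, hd]
  constructor
  · intro h
    by_contra hpos
    simp [hpos] at h
  · intro h
    simp only [if_pos h]
    exact_mod_cast ne_of_gt h
end

section
/- In the setting of the optimal full-rank covariance construction (HᴴH − GᴴG ≻ 0, GᴴG ≻ 0, S̄ = (HᴴH − GᴴG)^{-1}, S̄^{1/2}GᴴG S̄^{1/2} + I = ΦDΦᴴ with Φ unitary and D = diag(d_1,…,d_{n_t}) diagonal, Σ̄ = (I − D^{-1})^{-1/2}D^{-1}ΦᴴS̄ΦD^{-1}(I − D^{-1})^{-1/2} = UΩUᴴ with U unitary and Ω = diag(ω_i) positive definite, μ > 0, Λ_1 = diag(λ_{i,1}) with λ_{i,1} = (−1+√(1+4/(μω_i)))/2, Q* = S̄^{1/2}Φ(I − D^{-1})^{-1/2}D^{-1}(UΛ_1Uᴴ + I − D)D^{-1}(I − D^{-1})^{-1/2}ΦᴴS̄^{1/2}, and UΛ_1Uᴴ ≻ D − I), the secrecy rate achieved by Q* equals R(Q*)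 = Σ_{i=1}^{n_t} [log λ_{i,1} − log(λ_{i,1}+1)] + Σ_{i=1}^{n_t} [log d_i − log(d_i − 1)] = log det(I − (Λ_1+I)^{-1}) + log det(I + (D−I)^{-1}). -/
open Matrix
open scoped ComplexOrder

section Aux

variable {n : Type*} [Fintype n] [DecidableEq n]

lemma diag_inv' {α : Type*} [Field α] (v : n → α) (hv : ∀ i, v i ≠ 0) :
    (Matrix.diagonal v)⁻¹ = Matrix.diagonal (fun i => (v i)⁻¹) :=
  Matrix.inv_eq_right_inv (by
    rw [Matrix.diagonal_mul_diagonal, ← Matrix.diagonal_one]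
    exact congrArg _ (funext fun i => mul_inv_cancel₀ (hv i)))

lemma det_step (Sr Φ E D' M0 K : Matrix n n ℂ) :
    (1 + (Sr * Φ * E * D' * M0 * D' * E * Φᴴ * Sr) * K).det
      = (1 + M0 * (D' * E * (Φᴴ * (Sr * K * Sr)) * Φ * E * D')).det := by
  rw [show (Sr * Φ * E * D' * M0 * D' * E * Φᴴ * Sr) * K
      = Sr * (Φ * E * D' * M0 * D' * E * Φᴴ * Sr * K) by noncomm_ring,
    Matrix.det_one_add_mul_comm,
    show Φ * E * D' * M0 * D' * E * Φᴴ * Sr * K * Sr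
      = Φ * (E * D' * M0 * D' * E * Φᴴ * Sr * K * Sr) by noncomm_ring,
    Matrix.det_one_add_mul_comm,
    show E * D' * M0 * D' * E * Φᴴ * Sr * K * Sr * Φ
      = E * (D' * M0 * D' * E * Φᴴ * Sr * K * Sr * Φ) by noncomm_ring,
    Matrix.det_one_add_mul_comm,
    show D' * M0 * D' * E * Φᴴ * Sr * K * Sr * Φ * E
      = D' * (M0 * D' * E * Φᴴ * Sr * K * Sr * Φ * E) by noncomm_ring,
    Matrix.det_one_add_mul_comm]
  congr 1
  noncomm_ring

end Aux

set_option maxHeartbeats 1000000 in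
/-- In the setting of the optimal full-rank covariance construction, the
secrecy rate achieved by `Q*` equals
`Σᵢ [log λ_{i,1} − log(λ_{i,1}+1)] + Σᵢ [log d_i − log(d_i−1)]
 = log det(I − (Λ₁+I)⁻¹) + log det(I + (D−I)⁻¹)`. -/
theorem stmt13 {nr ne nt : ℕ}
    (H : Matrix (Fin nr) (Fin nt) ℂ) (G : Matrix (Fin ne) (Fin nt) ℂ)
    (hHG : (Hᴴ * H - Gᴴ * G).PosDef) (hGG : (Gᴴ * G).PosDef)
    (Sr : Matrix (Fin nt) (Fin nt) ℂ) (hSr : Sr.PosDef)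
    (hSrsq : Sr * Sr = (Hᴴ * H - Gᴴ * G)⁻¹)
    (Φ : Matrix (Fin nt) (Fin nt) ℂ) (hΦ : Φ * Φᴴ = 1 ∧ Φᴴ * Φ = 1)
    (d : Fin nt → ℝ) (hd : ∀ i, 1 < d i)
    (DM : Matrix (Fin nt) (Fin nt) ℂ)
    (hDM : DM = Matrix.diagonal fun i => (d i : ℂ))
    (hDdecomp : Sr * (Gᴴ * G) * Sr + 1 = Φ * DM * Φᴴ)
    (E : Matrix (Fin nt) (Fin nt) ℂ)
    (hE : E = Matrix.diagonal fun i => ((Real.sqrt (1 - (d i)⁻¹))⁻¹ : ℂ))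
    (Sig : Matrix (Fin nt) (Fin nt) ℂ)
    (hSig : Sig = E * DM⁻¹ * Φᴴ * (Hᴴ * H - Gᴴ * G)⁻¹ * Φ * DM⁻¹ * E)
    (U : Matrix (Fin nt) (Fin nt) ℂ) (hU : U * Uᴴ = 1 ∧ Uᴴ * U = 1)
    (ω : Fin nt → ℝ) (hω : ∀ i, 0 < ω i)
    (hSigU : Sig = U * (Matrix.diagonal fun i => (ω i : ℂ)) * Uᴴ)
    (μ : ℝ) (hμ : 0 < μ)
    (lam : Fin nt → ℝ)
    (hlam : ∀ i, lam i = (-1 + Real.sqrt (1 + 4 / (μ * ω i))) / 2)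
    (L : Matrix (Fin nt) (Fin nt) ℂ)
    (hL : L = Matrix.diagonal fun i => (lam i : ℂ))
    (Qs : Matrix (Fin nt) (Fin nt) ℂ)
    (hQs : Qs = Sr * Φ * E * DM⁻¹ * (U * L * Uᴴ + 1 - DM) * DM⁻¹ * E * Φᴴ * Sr)
    (hfull : (U * L * Uᴴ - (DM - 1)).PosDef) :
    secrecyRate H G Qs
      = (∑ i : Fin nt, (Real.log (lam i) - Real.log (lam i + 1)))
      + (∑ i : Fin nt, (Real.log (d i) - Real.log (d i - 1))) ∧
    secrecyRate H G Qs
      = Real.log ((1 - (Matrix.diagonal lam + 1)⁻¹ : Matrix (Fin nt) (Fin nt) ℝ).det)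
      + Real.log ((1 + (Matrix.diagonal d - 1)⁻¹ : Matrix (Fin nt) (Fin nt) ℝ).det) := by
  -- basic scalar positivity
  have hd0 : ∀ i, (0:ℝ) < d i := fun i => lt_trans one_pos (hd i)
  have hdm1 : ∀ i, (0:ℝ) < d i - 1 := fun i => sub_pos.2 (hd i)
  have hlam0 : ∀ i, 0 < lam i := by
    intro i
    have h4 : (0:ℝ) < 4 / (μ * ω i) := div_pos (by norm_num) (mul_pos hμ (hω i))
    have hs : Real.sqrt 1 < Real.sqrt (1 + 4 / (μ * ω i)) :=
      Real.sqrt_lt_sqrt zero_le_one (by linarith)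
    rw [Real.sqrt_one] at hs
    rw [hlam i]; linarith
  have hdC0 : ∀ i, (d i : ℂ) ≠ 0 := fun i => Complex.ofReal_ne_zero.2 (hd0 i).ne'
  have hdC1 : ∀ i, (d i : ℂ) - 1 ≠ 0 := fun i => by
    have : ((d i - 1 : ℝ) : ℂ) ≠ 0 := Complex.ofReal_ne_zero.2 (hdm1 i).ne'
    push_cast at this; exact this
  -- matrix preliminaries
  have hAdet : IsUnit (Hᴴ * H - Gᴴ * G).det := isUnit_iff_ne_zero.2 hHG.det_pos.ne'
  have hSrdet : IsUnit Sr.det := isUnit_iff_ne_zero.2 hSr.det_pos.ne'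
  have hSrASr : Sr * (Hᴴ * H - Gᴴ * G) * Sr = 1 := by
    have h1 : (Sr * Sr)⁻¹ = Sr⁻¹ * Sr⁻¹ := Matrix.mul_inv_rev Sr Sr
    rw [hSrsq, Matrix.nonsing_inv_nonsing_inv _ hAdet] at h1
    rw [h1, ← mul_assoc, Matrix.mul_nonsing_inv _ hSrdet, one_mul,
      Matrix.nonsing_inv_mul _ hSrdet]
  have hGSr : Sr * (Gᴴ * G) * Sr = Φ * DM * Φᴴ - 1 := eq_sub_of_add_eq hDdecomp
  have hHSr : Sr * (Hᴴ * H) * Sr = Φ * DM * Φᴴ := by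
    have hsplit : Hᴴ * H = (Hᴴ * H - Gᴴ * G) + Gᴴ * G := by abel
    calc Sr * (Hᴴ * H) * Sr
        = Sr * (Hᴴ * H - Gᴴ * G) * Sr + Sr * (Gᴴ * G) * Sr := by
          rw [hsplit]; noncomm_ring
      _ = Φ * DM * Φᴴ := by rw [hSrASr, hGSr]; abel
  -- diagonal matrices
  have hDMinv : DM⁻¹ = Matrix.diagonal (fun i => ((d i : ℂ))⁻¹) := by
    rw [hDM]; exact diag_inv' _ hdC0
  have hEsq : E * E = Matrix.diagonal (fun i => ((1 : ℂ) - (d i : ℂ)⁻¹)⁻¹) := by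
    rw [hE, Matrix.diagonal_mul_diagonal]
    refine congrArg _ (funext fun i => ?_)
    have hx : (0:ℝ) < 1 - (d i)⁻¹ := by
      have : (d i)⁻¹ < 1 := by rw [inv_lt_one_iff₀]; right; exact hd i
      linarith
    have hs : Real.sqrt (1 - (d i)⁻¹) * Real.sqrt (1 - (d i)⁻¹) = 1 - (d i)⁻¹ :=
      Real.mul_self_sqrt hx.le
    rw [← mul_inv, ← Complex.ofReal_mul, hs]
    push_cast
    ring
  have hEDM : E * DM = DM * E := by
    rw [hE, hDM, Matrix.diagonal_mul_diagonal, Matrix.diagonal_mul_diagonal]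
    exact congrArg _ (funext fun i => mul_comm _ _)
  have hDMinvDM : DM⁻¹ * DM = 1 := by
    rw [hDMinv, hDM, Matrix.diagonal_mul_diagonal, ← Matrix.diagonal_one]
    exact congrArg _ (funext fun i => inv_mul_cancel₀ (hdC0 i))
  have hDMDMinv : DM * DM⁻¹ = 1 := by
    rw [hDMinv, hDM, Matrix.diagonal_mul_diagonal, ← Matrix.diagonal_one]
    exact congrArg _ (funext fun i => mul_inv_cancel₀ (hdC0 i))
  have h1dC : ∀ i, ((1:ℂ) - (d i : ℂ)⁻¹) ≠ 0 := fun i => by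
    rw [show (1:ℂ) - (d i : ℂ)⁻¹ = ((d i : ℂ) - 1) / (d i : ℂ) by
      rw [eq_div_iff (hdC0 i), sub_mul, one_mul, inv_mul_cancel₀ (hdC0 i)]]
    exact div_ne_zero (hdC1 i) (hdC0 i)
  set M0 : Matrix (Fin nt) (Fin nt) ℂ := U * L * Uᴴ + 1 - DM with hM0
  have hUdet : U.det * Uᴴ.det = 1 := by rw [← Matrix.det_mul, hU.1, Matrix.det_one]
  have hDMF : DM * Matrix.diagonal (fun i => ((d i : ℂ) - 1)⁻¹)
      = 1 + Matrix.diagonal (fun i => ((d i : ℂ) - 1)⁻¹) := by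
    rw [hDM, Matrix.diagonal_mul_diagonal, ← Matrix.diagonal_one, Matrix.diagonal_add]
    refine congrArg _ (funext fun i => ?_)
    have h := hdC1 i
    field_simp
    ring
  -- determinant for H
  have hdetH : (1 + H * Qs * Hᴴ).det
      = (∏ i, (lam i : ℂ)) * ∏ i, ((d i : ℂ) - 1)⁻¹ := by
    rw [show H * Qs * Hᴴ = H * (Qs * Hᴴ) from Matrix.mul_assoc _ _ _,
      Matrix.det_one_add_mul_comm,
      show Qs * Hᴴ * H = Qs * (Hᴴ * H) from Matrix.mul_assoc _ _ _, hQs,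
      det_step, hHSr,
      show DM⁻¹ * E * (Φᴴ * (Φ * DM * Φᴴ)) * Φ * E * DM⁻¹
        = DM⁻¹ * E * ((Φᴴ * Φ) * (DM * ((Φᴴ * Φ) * (E * DM⁻¹)))) by noncomm_ring,
      hΦ.2, one_mul, one_mul]
    have htail : DM⁻¹ * E * (DM * (E * DM⁻¹))
        = Matrix.diagonal (fun i => ((d i : ℂ) - 1)⁻¹) := by
      rw [show DM⁻¹ * E * (DM * (E * DM⁻¹)) = DM⁻¹ * (E * DM) * (E * DM⁻¹)
          by noncomm_ring, hEDM,
        show DM⁻¹ * (DM * E) * (E * DM⁻¹) = DM⁻¹ * DM * (E * E) * DM⁻¹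
          by noncomm_ring, hDMinvDM, one_mul, hEsq, hDMinv,
        Matrix.diagonal_mul_diagonal]
      refine congrArg _ (funext fun i => ?_)
      rw [← mul_inv]
      congr 1
      rw [sub_mul, one_mul, inv_mul_cancel₀ (hdC0 i)]
    rw [htail]
    have hone : 1 + M0 * Matrix.diagonal (fun i => ((d i : ℂ) - 1)⁻¹)
        = U * L * Uᴴ * Matrix.diagonal (fun i => ((d i : ℂ) - 1)⁻¹) := by
      have hexp : M0 * Matrix.diagonal (fun i => ((d i : ℂ) - 1)⁻¹)
          = U * L * Uᴴ * Matrix.diagonal (fun i => ((d i : ℂ) - 1)⁻¹)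
            + Matrix.diagonal (fun i => ((d i : ℂ) - 1)⁻¹)
            - DM * Matrix.diagonal (fun i => ((d i : ℂ) - 1)⁻¹) := by
        rw [hM0]; noncomm_ring
      rw [hexp, hDMF]; noncomm_ring
    rw [hone, Matrix.det_mul, Matrix.det_mul, Matrix.det_mul,
      show U.det * L.det * Uᴴ.det * (Matrix.diagonal (fun i => ((d i : ℂ) - 1)⁻¹)).det
        = (U.det * Uᴴ.det) * (L.det * (Matrix.diagonal (fun i => ((d i : ℂ) - 1)⁻¹)).det)
        by ring, hUdet, one_mul, hL, Matrix.det_diagonal, Matrix.det_diagonal]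
  -- determinant for G
  have hdetG : (1 + G * Qs * Gᴴ).det
      = (∏ i, ((lam i : ℂ) + 1)) * ∏ i, ((d i : ℂ))⁻¹ := by
    rw [show G * Qs * Gᴴ = G * (Qs * Gᴴ) from Matrix.mul_assoc _ _ _,
      Matrix.det_one_add_mul_comm,
      show Qs * Gᴴ * G = Qs * (Gᴴ * G) from Matrix.mul_assoc _ _ _, hQs,
      det_step, hGSr,
      show DM⁻¹ * E * (Φᴴ * (Φ * DM * Φᴴ - 1)) * Φ * E * DM⁻¹
        = DM⁻¹ * E * ((Φᴴ * Φ) * (DM * (Φᴴ * Φ)) - Φᴴ * Φ) * (E * DM⁻¹) by noncomm_ring,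
      hΦ.2, one_mul, mul_one]
    have htail : DM⁻¹ * E * (DM - 1) * (E * DM⁻¹) = DM⁻¹ := by
      have hED1 : E * (DM - 1) = (DM - 1) * E := by
        rw [mul_sub, sub_mul, hEDM, mul_one, one_mul]
      rw [Matrix.mul_assoc DM⁻¹ E (DM - 1), hED1,
        show DM⁻¹ * ((DM - 1) * E) * (E * DM⁻¹)
          = DM⁻¹ * (DM - 1) * (E * E) * DM⁻¹ by noncomm_ring,
        hEsq, hDMinv,
        show DM - 1 = Matrix.diagonal (fun i => (d i : ℂ) - 1) by
          rw [hDM, ← Matrix.diagonal_one, Matrix.diagonal_sub],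
        Matrix.diagonal_mul_diagonal, Matrix.diagonal_mul_diagonal,
        Matrix.diagonal_mul_diagonal]
      refine congrArg _ (funext fun i => ?_)
      rw [show (1:ℂ) - (d i : ℂ)⁻¹ = ((d i : ℂ) - 1) / (d i : ℂ) by
          rw [eq_div_iff (hdC0 i), sub_mul, one_mul, inv_mul_cancel₀ (hdC0 i)],
        inv_div]
      field_simp [hdC0 i, hdC1 i]
    rw [htail]
    have hone : 1 + M0 * DM⁻¹ = U * (L + 1) * Uᴴ * DM⁻¹ := by
      have hexp : M0 * DM⁻¹ = U * L * Uᴴ * DM⁻¹ + DM⁻¹ - DM * DM⁻¹ := by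
        rw [hM0]; noncomm_ring
      have hrhs : U * (L + 1) * Uᴴ * DM⁻¹
          = U * L * Uᴴ * DM⁻¹ + U * Uᴴ * DM⁻¹ := by noncomm_ring
      rw [hexp, hDMDMinv, hrhs, hU.1]; noncomm_ring
    rw [hone, Matrix.det_mul, Matrix.det_mul, Matrix.det_mul,
      show U.det * (L + 1).det * Uᴴ.det * DM⁻¹.det
        = (U.det * Uᴴ.det) * ((L + 1).det * DM⁻¹.det) by ring,
      hUdet, one_mul, hDMinv,
      show L + 1 = Matrix.diagonal (fun i => (lam i : ℂ) + 1) by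
        rw [hL, ← Matrix.diagonal_one, Matrix.diagonal_add],
      Matrix.det_diagonal, Matrix.det_diagonal]
  -- convert to real numbers
  have hreH : (1 + H * Qs * Hᴴ).det.re = ∏ i, (lam i / (d i - 1)) := by
    rw [hdetH,
      show (∏ i, (lam i : ℂ)) * ∏ i, ((d i : ℂ) - 1)⁻¹
        = ∏ i, ((lam i / (d i - 1) : ℝ) : ℂ) by
        rw [← Finset.prod_mul_distrib]
        exact Finset.prod_congr rfl fun i _ => by push_cast; ring,
      ← Complex.ofReal_prod]
    exact Complex.ofReal_re _
  have hreG : (1 + G * Qs * Gᴴ).det.re = ∏ i, ((lam i + 1) / d i) := by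
    rw [hdetG,
      show (∏ i, ((lam i : ℂ) + 1)) * ∏ i, ((d i : ℂ))⁻¹
        = ∏ i, (((lam i + 1) / d i : ℝ) : ℂ) by
        rw [← Finset.prod_mul_distrib]
        exact Finset.prod_congr rfl fun i _ => by push_cast; ring,
      ← Complex.ofReal_prod]
    exact Complex.ofReal_re _
  -- the secrecy rate value
  have hrate : secrecyRate H G Qs
      = (∑ i : Fin nt, (Real.log (lam i) - Real.log (lam i + 1)))
      + (∑ i : Fin nt, (Real.log (d i) - Real.log (d i - 1))) := by
    unfold secrecyRate
    rw [hreH, hreG,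
      Real.log_prod (fun i _ => (div_pos (hlam0 i) (hdm1 i)).ne'),
      Real.log_prod (fun i _ =>
        (div_pos (by linarith [hlam0 i]) (hd0 i)).ne'),
      show (∑ i : Fin nt, Real.log (lam i / (d i - 1)))
        = ∑ i : Fin nt, (Real.log (lam i) - Real.log (d i - 1)) from
        Finset.sum_congr rfl fun i _ => Real.log_div (hlam0 i).ne' (hdm1 i).ne',
      show (∑ i : Fin nt, Real.log ((lam i + 1) / d i))
        = ∑ i : Fin nt, (Real.log (lam i + 1) - Real.log (d i)) from
        Finset.sum_congr rfl fun i _ =>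
          Real.log_div (by linarith [hlam0 i]) (hd0 i).ne',
      Finset.sum_sub_distrib, Finset.sum_sub_distrib, Finset.sum_sub_distrib,
      Finset.sum_sub_distrib]
    ring
  refine ⟨hrate, ?_⟩
  rw [hrate]
  have h1 : (1 - (Matrix.diagonal lam + 1)⁻¹ : Matrix (Fin nt) (Fin nt) ℝ)
      = Matrix.diagonal (fun i => 1 - (lam i + 1)⁻¹) := by
    rw [show (Matrix.diagonal lam + 1 : Matrix (Fin nt) (Fin nt) ℝ)
        = Matrix.diagonal (fun i => lam i + 1) by
        rw [← Matrix.diagonal_one, Matrix.diagonal_add],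
      diag_inv' _ (fun i => by linarith [hlam0 i] : ∀ i, lam i + 1 ≠ 0),
      ← Matrix.diagonal_one, Matrix.diagonal_sub]
  have h2 : (1 + (Matrix.diagonal d - 1)⁻¹ : Matrix (Fin nt) (Fin nt) ℝ)
      = Matrix.diagonal (fun i => 1 + (d i - 1)⁻¹) := by
    rw [show (Matrix.diagonal d - 1 : Matrix (Fin nt) (Fin nt) ℝ)
        = Matrix.diagonal (fun i => d i - 1) by
        rw [← Matrix.diagonal_one, Matrix.diagonal_sub],
      diag_inv' _ (fun i => (hdm1 i).ne'),
      ← Matrix.diagonal_one, Matrix.diagonal_add]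
  rw [h1, h2, Matrix.det_diagonal, Matrix.det_diagonal,
    Real.log_prod (fun i _ => by
      rw [show 1 - (lam i + 1)⁻¹ = lam i / (lam i + 1) by
        have h0 : lam i + 1 ≠ 0 := by linarith [hlam0 i]
        field_simp; ring]
      exact (div_pos (hlam0 i) (by linarith [hlam0 i])).ne'),
    Real.log_prod (fun i _ => by
      rw [show 1 + (d i - 1)⁻¹ = d i / (d i - 1) by
        have h0 : d i - 1 ≠ 0 := (hdm1 i).ne'
        field_simp; ring]
      exact (div_pos (hd0 i) (hdm1 i)).ne')]
  congr 1
  · refine Finset.sum_congr rfl fun i _ => ?_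
    rw [show 1 - (lam i + 1)⁻¹ = lam i / (lam i + 1) by
        have h0 : lam i + 1 ≠ 0 := by linarith [hlam0 i]
        field_simp; ring,
      Real.log_div (hlam0 i).ne' (by linarith [hlam0 i])]
  · refine Finset.sum_congr rfl fun i _ => ?_
    rw [show 1 + (d i - 1)⁻¹ = d i / (d i - 1) by
        have h0 : d i - 1 ≠ 0 := (hdm1 i).ne'
        field_simp; ring,
      Real.log_div (hd0 i).ne' (hdm1 i).ne']
end

section
/- Suppose HᴴH − GᴴG is positive definite and GᴴG is positive definite. Set S̄ = (HᴴH − GᴴG)^{-1}, and let Φ be unitary and D = diag(d_1,…,d_{n_t}) diagonal with S̄^{1/2}GᴴG S̄^{1/2} + I = ΦDΦᴴ (so d_i > 1 for all i). Then HᴴH · S̄^{1/2}Φ = GᴴG · S̄^{1/2}Φ · (I + (D − I)^{-1}); that is, the columns of S̄^{1/2}Φ are generalized eigenvectors of the pencil (HᴴH, GᴴG) with generalized eigenvalues d_i/(d_i − 1). Consequently Σ_{i=1}^{n_t} log(d_i/(d_i−1)) = log det(I + (D−I)^{-1}) = log det(HᴴH) − log det(GᴴG). -/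
open Matrix
open scoped ComplexOrder

/-- The columns of `S̄^{1/2}Φ` are generalized eigenvectors of the pencil
`(HᴴH, GᴴG)` with generalized eigenvalues `d_i/(d_i − 1)`, and
`Σᵢ log(d_i/(d_i−1)) = log det(I + (D−I)⁻¹) = log det(HᴴH) − log det(GᴴG)`. -/
theorem stmt15 {nr ne nt : ℕ}
    (H : Matrix (Fin nr) (Fin nt) ℂ) (G : Matrix (Fin ne) (Fin nt) ℂ)
    (hHG : (Hᴴ * H - Gᴴ * G).PosDef) (hGG : (Gᴴ * G).PosDef)
    (Sr : Matrix (Fin nt) (Fin nt) ℂ) (hSr : Sr.PosDef)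
    (hSrsq : Sr * Sr = (Hᴴ * H - Gᴴ * G)⁻¹)
    (Φ : Matrix (Fin nt) (Fin nt) ℂ) (hΦ : Φ * Φᴴ = 1 ∧ Φᴴ * Φ = 1)
    (d : Fin nt → ℝ) (hd : ∀ i, 1 < d i)
    (DM : Matrix (Fin nt) (Fin nt) ℂ)
    (hDM : DM = Matrix.diagonal fun i => (d i : ℂ))
    (hDdecomp : Sr * (Gᴴ * G) * Sr + 1 = Φ * DM * Φᴴ) :
    Hᴴ * H * (Sr * Φ) = Gᴴ * G * (Sr * Φ) * (1 + (DM - 1)⁻¹) ∧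
    (∑ i : Fin nt, Real.log (d i / (d i - 1)))
      = Real.log ((1 + (Matrix.diagonal d - 1)⁻¹ : Matrix (Fin nt) (Fin nt) ℝ).det) ∧
    (∑ i : Fin nt, Real.log (d i / (d i - 1)))
      = Real.log ((Hᴴ * H).det.re) - Real.log ((Gᴴ * G).det.re) := by
  obtain ⟨hΦ1, hΦ2⟩ := hΦ
  set A := Hᴴ * H - Gᴴ * G with hA
  set B := Gᴴ * G with hB
  have hdA : IsUnit A.det := isUnit_iff_ne_zero.mpr hHG.det_pos.ne'
  have hdSr : IsUnit Sr.det := isUnit_iff_ne_zero.mpr hSr.det_pos.ne'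
  have h1 := Matrix.mul_nonsing_inv Sr hdSr
  have h2 := Matrix.nonsing_inv_mul Sr hdSr
  have hAeq : A = (Sr * Sr)⁻¹ := by
    rw [hSrsq, Matrix.nonsing_inv_nonsing_inv _ hdA]
  have hSAS : Sr * A * Sr = 1 := by
    rw [hAeq, Matrix.mul_inv_rev, Matrix.mul_assoc, Matrix.mul_assoc, h2,
      Matrix.mul_one, h1]
  have hASr : A * Sr = Sr⁻¹ := by
    rw [hAeq, Matrix.mul_inv_rev, Matrix.mul_assoc, h2, Matrix.mul_one]
  have hHH : Hᴴ * H = A + B := (sub_add_cancel _ _).symm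
  have hdr : ∀ i, d i - 1 ≠ 0 := fun i => by have := hd i; intro h; linarith
  have hdpos : ∀ i, (0 : ℝ) < d i := fun i => lt_trans one_pos (hd i)
  have hE : DM - 1 = Matrix.diagonal (fun i => (d i : ℂ) - 1) := by
    rw [hDM, ← Matrix.diagonal_one, Matrix.diagonal_sub]
  have hdne : ∀ i, ((d i : ℂ) - 1) ≠ 0 := by
    intro i
    have : ((d i - 1 : ℝ) : ℂ) ≠ 0 := Complex.ofReal_ne_zero.mpr (hdr i)
    simpa using this
  have hdetE : IsUnit (DM - 1).det := by
    rw [hE, Matrix.det_diagonal]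
    exact isUnit_iff_ne_zero.mpr (Finset.prod_ne_zero_iff.mpr fun i _ => hdne i)
  have hEinv : (DM - 1) * (DM - 1)⁻¹ = 1 := Matrix.mul_nonsing_inv _ hdetE
  have hSBS : Sr * B * Sr = Φ * (DM - 1) * Φᴴ := by
    have h3 : Φ * (DM - 1) * Φᴴ = Φ * DM * Φᴴ - Φ * Φᴴ := by
      rw [Matrix.mul_sub, Matrix.sub_mul, Matrix.mul_one]
    rw [h3, ← hDdecomp, hΦ1, add_sub_cancel_right]
  have hkey : B * (Sr * Φ) = Sr⁻¹ * (Φ * (DM - 1)) := by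
    have e1 := congrArg (fun M => Sr⁻¹ * M * Φ) hSBS
    simp only [Matrix.mul_assoc] at e1
    rw [← Matrix.mul_assoc Sr⁻¹ Sr, h2, Matrix.one_mul, hΦ2, Matrix.mul_one] at e1
    exact e1
  have part1 : Hᴴ * H * (Sr * Φ) = B * (Sr * Φ) * (1 + (DM - 1)⁻¹) := by
    rw [Matrix.mul_add, Matrix.mul_one, hHH, Matrix.add_mul, hkey,
      ← Matrix.mul_assoc A Sr Φ, hASr]
    simp only [Matrix.mul_assoc, hEinv, Matrix.mul_one]
    exact add_comm _ _
  -- part 2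
  have hdiaginv : (Matrix.diagonal d - 1 : Matrix (Fin nt) (Fin nt) ℝ)⁻¹
      = Matrix.diagonal (fun i => (d i - 1)⁻¹) := by
    apply Matrix.inv_eq_right_inv
    rw [← Matrix.diagonal_one, Matrix.diagonal_sub, Matrix.diagonal_mul_diagonal]
    have : (fun i => (d i - 1) * (d i - 1)⁻¹) = fun _ : Fin nt => (1 : ℝ) :=
      funext fun i => mul_inv_cancel₀ (hdr i)
    rw [this, Matrix.diagonal_one]
  have hM : (1 + (Matrix.diagonal d - 1)⁻¹ : Matrix (Fin nt) (Fin nt) ℝ)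
      = Matrix.diagonal (fun i => d i / (d i - 1)) := by
    have hfun : ∀ i : Fin nt, 1 + (d i - 1)⁻¹ = d i / (d i - 1) := by
      intro i
      rw [inv_eq_one_div, one_add_div (hdr i), sub_add_cancel]
    rw [hdiaginv]
    ext i j
    rcases eq_or_ne i j with rfl | h
    · simp [Matrix.one_apply_eq, hfun i]
    · simp [Matrix.diagonal_apply_ne _ h, Matrix.one_apply_ne h]
  have part2 : (∑ i : Fin nt, Real.log (d i / (d i - 1)))
      = Real.log ((1 + (Matrix.diagonal d - 1)⁻¹ : Matrix (Fin nt) (Fin nt) ℝ).det) := by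
    rw [hM, Matrix.det_diagonal,
      Real.log_prod (fun i _ => div_ne_zero (hdpos i).ne' (hdr i))]
  -- part 3
  have hHHpd : (Hᴴ * H).PosDef := by rw [hHH]; exact hHG.add hGG
  have hSHS : Sr * (Hᴴ * H) * Sr = Φ * DM * Φᴴ := by
    rw [hHH, Matrix.mul_add, Matrix.add_mul, hSAS, ← hDdecomp]
    exact add_comm _ _
  have hΦdet : Φ.det * Φᴴ.det = 1 := by rw [← Matrix.det_mul, hΦ1, Matrix.det_one]
  have detH : Sr.det * (Hᴴ * H).det * Sr.det = ∏ i : Fin nt, (d i : ℂ) := by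
    have e := congrArg Matrix.det hSHS
    rw [Matrix.det_mul, Matrix.det_mul, Matrix.det_mul, Matrix.det_mul] at e
    calc Sr.det * (Hᴴ * H).det * Sr.det = Φ.det * DM.det * Φᴴ.det := e
      _ = (Φ.det * Φᴴ.det) * DM.det := by ring
      _ = DM.det := by rw [hΦdet, one_mul]
      _ = ∏ i : Fin nt, (d i : ℂ) := by rw [hDM, Matrix.det_diagonal]
  have detG : Sr.det * B.det * Sr.det = ∏ i : Fin nt, ((d i : ℂ) - 1) := by
    have e := congrArg Matrix.det hSBS
    rw [Matrix.det_mul, Matrix.det_mul, Matrix.det_mul, Matrix.det_mul] at e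
    calc Sr.det * B.det * Sr.det = Φ.det * (DM - 1).det * Φᴴ.det := e
      _ = (Φ.det * Φᴴ.det) * (DM - 1).det := by ring
      _ = (DM - 1).det := by rw [hΦdet, one_mul]
      _ = ∏ i : Fin nt, ((d i : ℂ) - 1) := by rw [hE, Matrix.det_diagonal]
  have reify : ∀ {M : Matrix (Fin nt) (Fin nt) ℂ}, M.PosDef →
      M.det = (M.det.re : ℂ) ∧ 0 < M.det.re := by
    intro M hM
    have h := hM.det_pos
    rw [Complex.lt_def] at h
    obtain ⟨hre, him⟩ := h
    simp only [Complex.zero_re, Complex.zero_im] at hre him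
    exact ⟨Complex.ext (by simp) (by simp [← him]), hre⟩
  obtain ⟨hseq, hs⟩ := reify hSr
  obtain ⟨hpeq, hpp⟩ := reify hHHpd
  obtain ⟨hqeq, hqq⟩ := reify hGG
  set s := Sr.det.re
  set p := (Hᴴ * H).det.re
  set q := B.det.re
  have hp : s * p * s = ∏ i : Fin nt, d i := by
    have e := detH
    rw [hseq, hpeq] at e
    exact_mod_cast e
  have hq : s * q * s = ∏ i : Fin nt, (d i - 1) := by
    have e := detG
    rw [hseq, hqeq] at e
    exact_mod_cast e
  have part3 : (∑ i : Fin nt, Real.log (d i / (d i - 1))) = Real.log p - Real.log q := by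
    calc ∑ i : Fin nt, Real.log (d i / (d i - 1))
        = ∑ i : Fin nt, (Real.log (d i) - Real.log (d i - 1)) :=
          Finset.sum_congr rfl fun i _ => Real.log_div (hdpos i).ne' (hdr i)
      _ = Real.log (∏ i : Fin nt, d i) - Real.log (∏ i : Fin nt, (d i - 1)) := by
          rw [Real.log_prod (fun i _ => (hdpos i).ne'),
            Real.log_prod (fun i _ => hdr i), Finset.sum_sub_distrib]
      _ = Real.log (s * p * s) - Real.log (s * q * s) := by rw [hp, hq]
      _ = Real.log p - Real.log q := by
          rw [Real.log_mul (mul_ne_zero hs.ne' hpp.ne') hs.ne',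
            Real.log_mul hs.ne' hpp.ne',
            Real.log_mul (mul_ne_zero hs.ne' hqq.ne') hs.ne',
            Real.log_mul hs.ne' hqq.ne']
          ring
  exact ⟨part1, part2, part3⟩
end

section
/- Suppose HᴴH − GᴴG is positive definite and GᴴG is positive definite. For P > 0 define the secrecy capacity C(P) = sup{ R(Q) : Q Hermitian positive semidefinite with Tr(Q) ≤ P }. Then C(P) tends to log det(HᴴH) − log det(GᴴG) as P → ∞; i.e., the high-SNR secrecy capacity equals the sum of the logarithms of the squared generalized singular values of (H, G). -/
open Matrix
open scoped ComplexOrder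

section Helpers

variable {n : Type*} [Fintype n] [DecidableEq n]

lemma det_one_add_psd_s16 {P : Matrix n n ℂ} (hP : P.PosSemidef) :
    ∃ c : ℝ, 1 ≤ c ∧ (1 + P).det = (c : ℂ) := by
  refine ⟨∏ i, (1 + hP.1.eigenvalues i), ?_, ?_⟩
  · have h := Finset.prod_le_prod (s := Finset.univ) (f := fun _ : n => (1:ℝ))
      (g := fun i => 1 + hP.1.eigenvalues i) (fun i _ => by norm_num)
      (fun i _ => by linarith [hP.eigenvalues_nonneg i])
    simpa using h
  · set U : Matrix n n ℂ := (hP.1.eigenvectorUnitary : Matrix n n ℂ) with hUdef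
    have hU : U * star U = 1 := Matrix.mem_unitaryGroup_iff.mp hP.1.eigenvectorUnitary.2
    have key : (1 : Matrix n n ℂ) + P
        = U * (1 + diagonal (RCLike.ofReal ∘ hP.1.eigenvalues)) * star U := by
      conv_lhs => rw [hP.1.spectral_theorem, Unitary.conjStarAlgAut_apply]
      rw [Matrix.mul_add, Matrix.mul_one, Matrix.add_mul, hU]
    rw [key, det_mul_right_comm, hU, one_mul]
    rw [show (1 : Matrix n n ℂ) + diagonal (RCLike.ofReal ∘ hP.1.eigenvalues)
        = diagonal (fun i => 1 + (hP.1.eigenvalues i : ℂ)) by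
      rw [← diagonal_one, diagonal_add]; rfl]
    rw [det_diagonal]
    push_cast
    rfl

lemma posdef_det_real {M : Matrix n n ℂ} (hM : M.PosDef) :
    0 < M.det.re ∧ M.det = (M.det.re : ℂ) := by
  have h := hM.det_pos
  rw [Complex.lt_def] at h
  refine ⟨by simpa using h.1, ?_⟩
  apply Complex.ext <;> simp [← h.2]

open scoped MatrixOrder in
lemma det_re_le_det_re_add {M N : Matrix n n ℂ} (hM : M.PosDef) (hN : N.PosSemidef) :
    M.det.re ≤ (M + N).det.re := by
  set T := CFC.sqrt N with hTdef
  have hTT : T * T = N := CFC.sqrt_mul_sqrt_self N hN.nonneg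
  have hTh : Tᴴ = T := (Matrix.nonneg_iff_posSemidef.mp (CFC.sqrt_nonneg N)).isHermitian
  have hMdet : IsUnit M.det := hM.det_pos.ne'.isUnit
  have key : M + N = M * (1 + M⁻¹ * N) := by
    rw [Matrix.mul_add, Matrix.mul_one, ← Matrix.mul_assoc, Matrix.mul_nonsing_inv _ hMdet,
      Matrix.one_mul]
  have hP : (T * M⁻¹ * T).PosSemidef := by
    have := hM.inv.posSemidef.mul_mul_conjTranspose_same T
    rwa [hTh] at this
  obtain ⟨c, hc1, hdc⟩ := det_one_add_psd_s16 hP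
  have h2 : (1 + M⁻¹ * N).det = (c : ℂ) := by
    rw [← hTT, ← Matrix.mul_assoc, det_one_add_mul_comm, ← Matrix.mul_assoc, hdc]
  have h3 : (M + N).det = M.det * (c : ℂ) := by rw [key, det_mul, h2]
  have h4 := (posdef_det_real hM).1
  have h5 : (M + N).det.re = M.det.re * c := by rw [h3]; simp [Complex.mul_re]
  rw [h5]
  nlinarith

lemma inv_sub_inv_psd {A B : Matrix n n ℂ} (hA : A.PosDef) (hB : B.PosDef)
    (hAB : (A - B).PosSemidef) : (B⁻¹ - A⁻¹).PosSemidef := by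
  have hAd : IsUnit A.det := hA.det_pos.ne'.isUnit
  have hBd : IsUnit B.det := hB.det_pos.ne'.isUnit
  have hA1 : A⁻¹ * A = 1 := Matrix.nonsing_inv_mul _ hAd
  have hA2 : A * A⁻¹ = 1 := Matrix.mul_nonsing_inv _ hAd
  have hB1 : B⁻¹ * B = 1 := Matrix.nonsing_inv_mul _ hBd
  have hB2 : B * B⁻¹ = 1 := Matrix.mul_nonsing_inv _ hBd
  have hAinvH : (A⁻¹)ᴴ = A⁻¹ := hA.isHermitian.inv
  have e1 : A⁻¹ * (A - B) * B⁻¹ = B⁻¹ - A⁻¹ := by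
    simp only [Matrix.mul_sub, Matrix.sub_mul, Matrix.mul_assoc,
      Matrix.nonsing_inv_mul_cancel_left _ _ hAd, Matrix.mul_nonsing_inv _ hBd,
      Matrix.mul_nonsing_inv_cancel_left _ _ hBd, Matrix.mul_one]
  have e2 : (A - B) * A⁻¹ = 1 - B * A⁻¹ := by rw [Matrix.sub_mul, hA2]
  have e3 : A⁻¹ * (A - B) * A⁻¹ = A⁻¹ - A⁻¹ * B * A⁻¹ := by
    simp only [Matrix.mul_sub, Matrix.sub_mul, Matrix.mul_assoc,
      Matrix.nonsing_inv_mul_cancel_left _ _ hAd, Matrix.mul_nonsing_inv _ hAd,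
      Matrix.mul_one]
  have key : B⁻¹ - A⁻¹ = A⁻¹ * (A - B) * A⁻¹ + (A⁻¹ * (A - B)) * B⁻¹ * ((A - B) * A⁻¹) := by
    rw [e3, show (A⁻¹ * (A - B)) * B⁻¹ * ((A - B) * A⁻¹)
        = (A⁻¹ * (A - B) * B⁻¹) * ((A - B) * A⁻¹) by
      simp only [Matrix.mul_assoc], e1, e2, Matrix.mul_sub, Matrix.mul_one,
      Matrix.sub_mul]
    rw [show B⁻¹ * (B * A⁻¹) = A⁻¹ from Matrix.nonsing_inv_mul_cancel_left _ _ hBd]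
    simp only [Matrix.mul_assoc]
    abel
  have hconj : ((A⁻¹ * (A - B)))ᴴ = (A - B) * A⁻¹ := by
    rw [conjTranspose_mul, hAinvH, hAB.isHermitian.eq]
  have p1 : (A⁻¹ * (A - B) * A⁻¹).PosSemidef := by
    have := hAB.mul_mul_conjTranspose_same A⁻¹
    rwa [hAinvH, Matrix.mul_assoc, ← Matrix.mul_assoc] at this
  have p2 : ((A⁻¹ * (A - B)) * B⁻¹ * ((A - B) * A⁻¹)).PosSemidef := by
    have := hB.inv.posSemidef.mul_mul_conjTranspose_same (A⁻¹ * (A - B))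
    rwa [hconj] at this
  rw [key]
  exact p1.add p2

lemma rate_le_limit {A B Q : Matrix n n ℂ} (hA : A.PosDef) (hB : B.PosDef)
    (hAB : (A - B).PosSemidef) (hQ : Q.PosSemidef) :
    Real.log (1 + A * Q).det.re - Real.log (1 + B * Q).det.re ≤
      Real.log A.det.re - Real.log B.det.re := by
  have hAd : IsUnit A.det := hA.det_pos.ne'.isUnit
  have hBd : IsUnit B.det := hB.det_pos.ne'.isUnit
  have hAQ : (A⁻¹ + Q).PosDef := hA.inv.add_posSemidef hQ
  have hBQ : (B⁻¹ + Q).PosDef := hB.inv.add_posSemidef hQ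
  have fA : (1 + A * Q) = A * (A⁻¹ + Q) := by
    rw [Matrix.mul_add, Matrix.mul_nonsing_inv _ hAd]
  have fB : (1 + B * Q) = B * (B⁻¹ + Q) := by
    rw [Matrix.mul_add, Matrix.mul_nonsing_inv _ hBd]
  obtain ⟨haP, haE⟩ := posdef_det_real hA
  obtain ⟨hbP, hbE⟩ := posdef_det_real hB
  obtain ⟨haQP, haQE⟩ := posdef_det_real hAQ
  obtain ⟨hbQP, hbQE⟩ := posdef_det_real hBQ
  have dA : (1 + A * Q).det.re = A.det.re * (A⁻¹ + Q).det.re := by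
    rw [fA, det_mul, haE, haQE]
    push_cast
    simp
  have dB : (1 + B * Q).det.re = B.det.re * (B⁻¹ + Q).det.re := by
    rw [fB, det_mul, hbE, hbQE]
    push_cast
    simp
  have mono : (A⁻¹ + Q).det.re ≤ (B⁻¹ + Q).det.re := by
    have h := det_re_le_det_re_add hAQ (inv_sub_inv_psd hA hB hAB)
    rwa [show A⁻¹ + Q + (B⁻¹ - A⁻¹) = B⁻¹ + Q by abel] at h
  rw [dA, dB, Real.log_mul haP.ne' haQP.ne', Real.log_mul hbP.ne' hbQP.ne']
  have := Real.log_le_log haQP mono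
  linarith

lemma smul_one_psd {c : ℝ} (hc : 0 ≤ c) : ((c : ℂ) • (1 : Matrix n n ℂ)).PosSemidef := by
  rw [smul_one_eq_diagonal]
  exact posSemidef_diagonal_iff.mpr fun i => by
    simpa using Complex.zero_le_real.mpr hc

lemma smul_one_pd {c : ℝ} (hc : 0 < c) : ((c : ℂ) • (1 : Matrix n n ℂ)).PosDef := by
  rw [smul_one_eq_diagonal]
  exact posDef_diagonal_iff.mpr fun i => by
    simpa using Complex.zero_lt_real.mpr hc

lemma rate_smul_one {A : Matrix n n ℂ} (hA : A.PosDef) {c : ℝ} (hc : 0 < c) :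
    Real.log (1 + A * ((c : ℂ) • 1)).det.re =
      (Fintype.card n) * Real.log c + Real.log ((((c⁻¹ : ℝ) : ℂ) • 1 + A).det.re) := by
  have hne : (c : ℂ) ≠ 0 := by exact_mod_cast hc.ne'
  have h1 : (1 : Matrix n n ℂ) + A * ((c : ℂ) • 1)
      = (c : ℂ) • ((((c⁻¹ : ℝ) : ℂ)) • 1 + A) := by
    rw [smul_add, smul_smul, mul_smul_comm, Matrix.mul_one]
    push_cast
    rw [mul_inv_cancel₀ hne, one_smul]
  have hPD : ((((c⁻¹ : ℝ) : ℂ)) • 1 + A).PosDef :=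
    (smul_one_pd (inv_pos.mpr hc)).add_posSemidef hA.posSemidef
  obtain ⟨hrP, hrE⟩ := posdef_det_real hPD
  have h2 : (1 + A * ((c : ℂ) • 1)).det
      = ((c ^ Fintype.card n * ((((c⁻¹ : ℝ) : ℂ)) • 1 + A).det.re : ℝ) : ℂ) := by
    rw [h1, det_smul, hrE]
    push_cast
    simp
  rw [h2]
  simp only [Complex.ofReal_re]
  rw [Real.log_mul (by positivity) hrP.ne', Real.log_pow]

end Helpers

/-- If `HᴴH − GᴴG ≻ 0` and `GᴴG ≻ 0`, the secrecy capacity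
`C(P) = sup{R(Q) : Q PSD, Tr Q ≤ P}` tends to
`log det(HᴴH) − log det(GᴴG)` as `P → ∞`. -/
theorem stmt16 {nr ne nt : ℕ}
    (H : Matrix (Fin nr) (Fin nt) ℂ) (G : Matrix (Fin ne) (Fin nt) ℂ)
    (hHG : (Hᴴ * H - Gᴴ * G).PosDef) (hGG : (Gᴴ * G).PosDef)
    (C : ℝ → ℝ)
    (hC : ∀ P : ℝ, C P = sSup {r : ℝ | ∃ Q : Matrix (Fin nt) (Fin nt) ℂ,
      Q.PosSemidef ∧ Q.trace.re ≤ P ∧ r = secrecyRate H G Q}) :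
    Filter.Tendsto C Filter.atTop
      (nhds (Real.log ((Hᴴ * H).det.re) - Real.log ((Gᴴ * G).det.re))) := by
  classical
  have hApd : (Hᴴ * H).PosDef := by
    have := hGG.add_posSemidef hHG.posSemidef
    rwa [show Gᴴ * G + (Hᴴ * H - Gᴴ * G) = Hᴴ * H by abel] at this
  set A := Hᴴ * H with hAdef
  set B := Gᴴ * G with hBdef
  have hABpsd : (A - B).PosSemidef := hHG.posSemidef
  set L := Real.log A.det.re - Real.log B.det.re with hLdef
  -- rewrite the secrecy rate via the Weinstein–Aronszajn identity
  have rate_eq : ∀ Q : Matrix (Fin nt) (Fin nt) ℂ,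
      secrecyRate H G Q
        = Real.log (1 + A * Q).det.re - Real.log (1 + B * Q).det.re := by
    intro Q
    have e1 : (1 + H * Q * Hᴴ).det = (1 + A * Q).det := by
      rw [det_one_add_mul_comm, hAdef, Matrix.mul_assoc]
    have e2 : (1 + G * Q * Gᴴ).det = (1 + B * Q).det := by
      rw [det_one_add_mul_comm, hBdef, Matrix.mul_assoc]
    unfold secrecyRate
    rw [e1, e2]
  -- upper bound
  have upper : ∀ Q : Matrix (Fin nt) (Fin nt) ℂ, Q.PosSemidef → secrecyRate H G Q ≤ L := by
    intro Q hQ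
    rw [rate_eq]
    exact rate_le_limit hApd hGG hABpsd hQ
  set m : ℝ := (nt : ℝ) + 1 with hmdef
  have hm : 0 < m := by positivity
  set F : ℝ → ℝ := fun P => secrecyRate H G (((P / m : ℝ) : ℂ) • 1) with hFdef
  set hfun : ℝ → ℝ := fun t =>
    Real.log ((((t : ℝ) : ℂ) • 1 + A).det.re) - Real.log ((((t : ℝ) : ℂ) • 1 + B).det.re)
    with hfundef
  have hfun0 : hfun 0 = L := by
    simp only [hfundef, Complex.ofReal_zero, zero_smul, zero_add, hLdef]
  -- continuity of hfun at 0
  have cont : ContinuousAt hfun 0 := by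
    have c1 : Continuous fun t : ℝ => ((((t : ℝ) : ℂ) • 1 + A).det.re) :=
      Complex.continuous_re.comp
        ((Continuous.smul (Complex.continuous_ofReal) continuous_const).add
          continuous_const).matrix_det
    have c2 : Continuous fun t : ℝ => ((((t : ℝ) : ℂ) • 1 + B).det.re) :=
      Complex.continuous_re.comp
        ((Continuous.smul (Complex.continuous_ofReal) continuous_const).add
          continuous_const).matrix_det
    apply ContinuousAt.sub
    · exact (Real.continuousAt_log
        (by simp only [Complex.ofReal_zero, zero_smul, zero_add]
            exact (posdef_det_real hApd).1.ne')).comp c1.continuousAt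
    · exact (Real.continuousAt_log
        (by simp only [Complex.ofReal_zero, zero_smul, zero_add]
            exact (posdef_det_real hGG).1.ne')).comp c2.continuousAt
  -- F is eventually equal to hfun ∘ (P ↦ (P/m)⁻¹)
  have Fval : ∀ P : ℝ, 0 < P → F P = hfun ((P / m)⁻¹) := by
    intro P hP
    have hc : 0 < P / m := div_pos hP hm
    rw [hFdef]
    simp only
    rw [rate_eq, rate_smul_one hApd hc, rate_smul_one hGG hc, hfundef]
    ring
  have T1 : Filter.Tendsto (fun P : ℝ => (P / m)⁻¹) Filter.atTop (nhds 0) :=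
    tendsto_inv_atTop_zero.comp (Filter.tendsto_id.atTop_div_const hm)
  have TF : Filter.Tendsto F Filter.atTop (nhds L) := by
    rw [← hfun0]
    apply Filter.Tendsto.congr' _ (cont.tendsto.comp T1)
    filter_upwards [Filter.eventually_gt_atTop 0] with P hP
    exact (Fval P hP).symm
  -- sandwich
  have mem : ∀ P : ℝ, 0 ≤ P →
      F P ∈ {r : ℝ | ∃ Q : Matrix (Fin nt) (Fin nt) ℂ,
        Q.PosSemidef ∧ Q.trace.re ≤ P ∧ r = secrecyRate H G Q} := by
    intro P hP
    refine ⟨((P / m : ℝ) : ℂ) • 1, smul_one_psd (by positivity), ?_, rfl⟩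
    have : (((P / m : ℝ) : ℂ) • (1 : Matrix (Fin nt) (Fin nt) ℂ)).trace
        = (((P / m * nt : ℝ)) : ℂ) := by
      rw [trace_smul, trace_one, smul_eq_mul, Fintype.card_fin]
      push_cast
      ring
    rw [this, Complex.ofReal_re, hmdef, div_mul_eq_mul_div, div_le_iff₀ (by positivity)]
    nlinarith
  have bdd : ∀ P : ℝ, BddAbove {r : ℝ | ∃ Q : Matrix (Fin nt) (Fin nt) ℂ,
      Q.PosSemidef ∧ Q.trace.re ≤ P ∧ r = secrecyRate H G Q} := by
    intro P
    exact ⟨L, fun r hr => by obtain ⟨Q, hQ, -, rfl⟩ := hr; exact upper Q hQ⟩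
  apply tendsto_of_tendsto_of_tendsto_of_le_of_le' TF tendsto_const_nhds
  · filter_upwards [Filter.eventually_ge_atTop (0:ℝ)] with P hP
    rw [hC P]
    exact le_csSup (bdd P) (mem P hP)
  · filter_upwards [Filter.eventually_ge_atTop (0:ℝ)] with P hP
    rw [hC P]
    apply csSup_le ⟨F P, mem P hP⟩
    rintro r ⟨Q, hQ, -, rfl⟩
    exact upper Q hQ
end

section
/- Suppose G = 0 (no eavesdropper channel) and HᴴH is positive definite. Fix μ > 0 such that μ^{-1} I − (HᴴH)^{-1} is positive semidefinite, and set Q* = μ^{-1} I − (HᴴH)^{-1} (the water-filling covariance, Q* = Φ_H (μ^{-1}I − Λ_H^{-1})⁺ Φ_Hᴴ for the eigendecomposition HᴴH = Φ_H Λ_H Φ_Hᴴ). Then Q* maximizes log det(I + H Q Hᴴ) over all Hermitian positive semidefinite Q with Tr(Q) = Tr(Q*). -/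
open Matrix
open scoped ComplexOrder

private lemma trace_eq_sum_eigs {n : ℕ} {M : Matrix (Fin n) (Fin n) ℂ}
    (hM : M.IsHermitian) : M.trace = ∑ i, (hM.eigenvalues i : ℂ) := by
  conv_lhs => rw [hM.spectral_theorem]
  rw [Unitary.conjStarAlgAut_apply, Matrix.trace_mul_cycle,
    Matrix.mem_unitaryGroup_iff'.mp (hM.eigenvectorUnitary).2, one_mul,
    Matrix.trace_diagonal]
  simp

private lemma det_re_le_pow {n : ℕ} {M : Matrix (Fin n) (Fin n) ℂ}
    (hM : M.PosSemidef) {c : ℝ} (hc : 0 ≤ c) (htr : M.trace.re = n * c) :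
    M.det.re ≤ c ^ n := by
  set lam : Fin n → ℝ := hM.1.eigenvalues with hlam
  have hnn : ∀ i, 0 ≤ lam i := hM.eigenvalues_nonneg
  have hdet : M.det.re = ∏ i, lam i := by
    rw [hM.1.det_eq_prod_eigenvalues]; norm_cast
  have hsum : ∑ i, lam i = n * c := by
    have := trace_eq_sum_eigs hM.1
    rw [this] at htr
    rw [← htr]
    push_cast
    simp [hlam]
  rw [hdet]
  rcases Nat.eq_zero_or_pos n with hn | hn
  · subst hn; simp
  have hnpos : (0 : ℝ) < n := by exact_mod_cast hn
  have key := Real.geom_mean_le_arith_mean_weighted Finset.univ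
    (fun _ => (n : ℝ)⁻¹) lam (fun i _ => by positivity)
    (by simp [Finset.card_univ, mul_inv_cancel₀ hnpos.ne']) (fun i _ => hnn i)
  have hrhs : ∑ i, (n : ℝ)⁻¹ * lam i = c := by
    rw [← Finset.mul_sum, hsum]
    field_simp
  rw [hrhs] at key
  have hprod : ∏ i, lam i = (∏ i, lam i ^ ((n : ℝ)⁻¹)) ^ n := by
    rw [← Finset.prod_pow]
    refine Finset.prod_congr rfl fun i _ => ?_
    rw [← Real.rpow_natCast (lam i ^ ((n:ℝ)⁻¹)) n, ← Real.rpow_mul (hnn i),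
      inv_mul_cancel₀ hnpos.ne', Real.rpow_one]
  rw [hprod]
  exact pow_le_pow_left₀ (Finset.prod_nonneg fun i _ => Real.rpow_nonneg (hnn i) _) key n

/-- Water-filling: with `G = 0` and `HᴴH ≻ 0`, the covariance
`Q* = μ⁻¹I − (HᴴH)⁻¹` (assumed PSD) maximizes `log det(I + HQHᴴ)` among all
PSD `Q` with `Tr Q = Tr Q*`. -/
theorem stmt17 {nr nt : ℕ}
    (H : Matrix (Fin nr) (Fin nt) ℂ)
    (hH : (Hᴴ * H).PosDef)
    (μ : ℝ) (hμ : 0 < μ)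
    (Qstar : Matrix (Fin nt) (Fin nt) ℂ)
    (hQdef : Qstar = ((μ⁻¹ : ℝ) : ℂ) • (1 : Matrix (Fin nt) (Fin nt) ℂ) - (Hᴴ * H)⁻¹)
    (hQpsd : Qstar.PosSemidef) :
    ∀ Q : Matrix (Fin nt) (Fin nt) ℂ, Q.PosSemidef → Q.trace = Qstar.trace →
      Real.log ((1 + H * Q * Hᴴ).det.re)
        ≤ Real.log ((1 + H * Qstar * Hᴴ).det.re) := by
  intro Q hQ htr
  set A := Hᴴ * H with hA
  have hdetA : IsUnit A.det := hH.isUnit.map (Matrix.detMonoidHom)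
  -- key determinant identity
  have key : ∀ R : Matrix (Fin nt) (Fin nt) ℂ,
      (1 + H * R * Hᴴ).det = A.det * (A⁻¹ + R).det := by
    intro R
    have h1 : (1 + H * R * Hᴴ).det = (1 + A * R).det := by
      rw [Matrix.mul_assoc, Matrix.det_one_add_mul_comm, Matrix.mul_assoc, ← hA,
        Matrix.det_one_add_mul_comm]
    have h2 : A * (A⁻¹ + R) = 1 + A * R := by
      rw [Matrix.mul_add, Matrix.mul_nonsing_inv _ hdetA]
    rw [h1, ← h2, Matrix.det_mul]
  -- the matrix A⁻¹ + Qstar is a scalar matrix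
  have hscalar : A⁻¹ + Qstar = ((μ⁻¹ : ℝ) : ℂ) • (1 : Matrix (Fin nt) (Fin nt) ℂ) := by
    rw [hQdef]; abel
  -- positivity / realness facts
  have hdetA_pos : 0 < A.det := hH.det_pos
  have hdetA_re : (0:ℝ) < A.det.re ∧ A.det.im = 0 := by
    rw [Complex.lt_def] at hdetA_pos
    simpa using ⟨hdetA_pos.1, hdetA_pos.2.symm⟩
  have hMpd : (A⁻¹ + Q).PosDef := hH.inv.add_posSemidef hQ
  have hMdet_pos : 0 < (A⁻¹ + Q).det := hMpd.det_pos
  have hMdet_re : (0:ℝ) < (A⁻¹ + Q).det.re ∧ (A⁻¹ + Q).det.im = 0 := by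
    rw [Complex.lt_def] at hMdet_pos
    simpa using ⟨hMdet_pos.1, hMdet_pos.2.symm⟩
  -- trace of A⁻¹ + Q
  have htrace : (A⁻¹ + Q).trace.re = nt * μ⁻¹ := by
    have : (A⁻¹ + Q).trace = (A⁻¹ + Qstar).trace := by
      rw [Matrix.trace_add, Matrix.trace_add, htr]
    rw [this, hscalar, Matrix.trace_smul, Matrix.trace_one]
    simp [mul_comm]
  -- AM-GM bound
  have hbound : (A⁻¹ + Q).det.re ≤ μ⁻¹ ^ nt :=
    det_re_le_pow hMpd.posSemidef (by positivity) htrace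
  -- compute both sides' real parts
  have hre_mul : ∀ z w : ℂ, z.im = 0 → w.im = 0 → (z * w).re = z.re * w.re := by
    intro z w hz hw; simp [Complex.mul_re, hz, hw]
  have hlhs : (1 + H * Q * Hᴴ).det.re = A.det.re * (A⁻¹ + Q).det.re := by
    rw [key Q, hre_mul _ _ hdetA_re.2 hMdet_re.2]
  have hrhs : (1 + H * Qstar * Hᴴ).det.re = A.det.re * μ⁻¹ ^ nt := by
    rw [key Qstar, hscalar]
    have : (((μ⁻¹ : ℝ) : ℂ) • (1 : Matrix (Fin nt) (Fin nt) ℂ)).det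
        = ((μ⁻¹ ^ nt : ℝ) : ℂ) := by
      rw [Matrix.det_smul, Matrix.det_one]
      push_cast
      simp
    rw [this, hre_mul _ _ hdetA_re.2 (Complex.ofReal_im _), Complex.ofReal_re]
  apply Real.log_le_log
  · rw [hlhs]; exact mul_pos hdetA_re.1 hMdet_re.1
  · rw [hlhs, hrhs]
    exact mul_le_mul_of_nonneg_left hbound hdetA_re.1.le
end
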